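/- (Eigenvalue locations / rigidity; Theorem 7.5.) Suppose δ_- ≥ c for some constant c > 0, and that ‖H‖ ≤ 2 + O_≺(X) and sup_{E ∈ ℝ}|𝔫_N(E) − n(E)| = O_≺(Y) hold for some deterministic control parameters X, Y ≤ C. Define α̂ := min(α, N+1−α) and fix ε > 0. Then |λ_α − γ_α| ≺ Y (N/α̂)^{1/3} uniformly over all α with α̂ ≥ M^ε N Y, and |λ_α − γ_α| ≺ X + (M^ε Y)^{2/3} uniformly over all α with α̂ ≤ M^ε N Y. -/

import Mathlib

open MeasureTheory ProbabilityTheory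

noncomputable section

/-- The Stieltjes transform of Wigner's semicircle law,
`m(z) = (2π)⁻¹ ∫_{-2}^{2} √(4-x²)/(x-z) dx`. -/
def msc (z : ℂ) : ℂ :=
  (2 * Real.pi : ℂ)⁻¹ * ∫ x in (-2:ℝ)..(2:ℝ), (Real.sqrt (4 - x ^ 2) : ℂ) / ((x : ℂ) - z)

/-- `κ_E := ||E| - 2|`, the distance of the energy `E` to the spectral edges `±2`. -/
def kappaE (Ee : ℝ) : ℝ := |(|Ee| - 2)|

/-- The sup norm of a vector. -/
def supNorm {N : ℕ} (v : Fin N → ℂ) : ℝ := ⨆ i, ‖v i‖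

/-- The `ℓ∞ → ℓ∞` operator norm of a matrix: `max_i ∑_j |A i j|`. -/
def linftyNorm {N : ℕ} (A : Matrix (Fin N) (Fin N) ℂ) : ℝ := ⨆ i, ∑ j, ‖A i j‖

/-- A real matrix viewed as a complex matrix. -/
def sToC {N : ℕ} (S : Matrix (Fin N) (Fin N) ℝ) : Matrix (Fin N) (Fin N) ℂ :=
  S.map (fun x : ℝ => (x : ℂ))

/-- `Γ(z) := ‖(1 - m(z)² S)⁻¹‖_{ℓ∞→ℓ∞}`. -/
def Gamma {N : ℕ} (S : Matrix (Fin N) (Fin N) ℝ) (z : ℂ) : ℝ :=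
  linftyNorm (1 - msc z ^ 2 • sToC S)⁻¹

/-- `Γ̃(z)`: the `ℓ∞→ℓ∞` norm of `(1 - m(z)² S)⁻¹` restricted to the orthogonal complement
of the constant vector `e` (vectors whose entries sum to zero). -/
def GammaTilde {N : ℕ} (S : Matrix (Fin N) (Fin N) ℝ) (z : ℂ) : ℝ :=
  sSup { r : ℝ | ∃ v : Fin N → ℂ, (∑ i, v i) = 0 ∧ supNorm v ≤ 1 ∧
    r = supNorm (Matrix.mulVec (1 - msc z ^ 2 • sToC S)⁻¹ v) }

/-- A sequence (indexed by `N`) of random `N×N` complex matrices. -/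
structure MatrixEnsemble where
  Ω : ℕ → Type
  ms : ∀ N, MeasurableSpace (Ω N)
  P : ∀ N, @Measure (Ω N) (ms N)
  isProb : ∀ N, IsProbabilityMeasure (P N)
  H : ∀ N, Ω N → Matrix (Fin N) (Fin N) ℂ

instance (E : MatrixEnsemble) (N : ℕ) : MeasurableSpace (E.Ω N) := E.ms N

/-- The variances `s_ij := E |h_ij|²`. -/
def vVar (E : MatrixEnsemble) (N : ℕ) (i j : Fin N) : ℝ :=
  ∫ ω, ‖E.H N ω i j‖ ^ 2 ∂(E.P N)

/-- The matrix of variances `S = (s_ij)`. -/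
def sMat (E : MatrixEnsemble) (N : ℕ) : Matrix (Fin N) (Fin N) ℝ :=
  Matrix.of fun i j => vVar E N i j

/-- `M := (max_{i,j} s_ij)⁻¹`. -/
def Mpar (E : MatrixEnsemble) (N : ℕ) : ℝ := (⨆ i : Fin N, ⨆ j : Fin N, vVar E N i j)⁻¹

/-- The assumptions of the paper: a Hermitian random matrix whose upper-triangular entries are
independent and centred, with real diagonal, doubly stochastic variance matrix `S`,
`N^δ ≤ M ≤ N`, and uniformly bounded moments of the normalized entries
(`E|ζ_ij|^p ≤ μ_p`, i.e. `E|h_ij|^p ≤ μ_p s_ij^{p/2}`). -/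
structure IsWignerType (E : MatrixEnsemble) (δ : ℝ) (μmom : ℕ → ℝ) : Prop where
  measurable : ∀ N (i j : Fin N), Measurable fun ω => E.H N ω i j
  hermitian : ∀ N ω, (E.H N ω).IsHermitian
  indep : ∀ N, iIndepFun
    (fun (p : {q : Fin N × Fin N // q.1 ≤ q.2}) (ω : E.Ω N) => E.H N ω p.1.1 p.1.2) (E.P N)
  centered : ∀ N (i j : Fin N), ∫ ω, E.H N ω i j ∂(E.P N) = 0
  diagReal : ∀ N (i : Fin N) ω, (E.H N ω i i).im = 0
  stochastic : ∀ N (i : Fin N), ∑ j, vVar E N i j = 1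
  δ_pos : 0 < δ
  M_lower : ∀ N : ℕ, (N : ℝ) ^ δ ≤ Mpar E N
  M_upper : ∀ N : ℕ, Mpar E N ≤ (N : ℝ)
  moments : ∀ (p : ℕ) N (i j : Fin N),
    ∫ ω, ‖E.H N ω i j‖ ^ p ∂(E.P N) ≤ μmom p * vVar E N i j ^ ((p : ℝ) / 2)

/-- The resolvent `G(z) = (H - z)⁻¹`. -/
def resG (E : MatrixEnsemble) (N : ℕ) (z : ℂ) (ω : E.Ω N) : Matrix (Fin N) (Fin N) ℂ :=
  (E.H N ω - z • (1 : Matrix (Fin N) (Fin N) ℂ))⁻¹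

/-- `m_N(z) = N⁻¹ Tr G(z)`. -/
def mN (E : MatrixEnsemble) (N : ℕ) (z : ℂ) (ω : E.Ω N) : ℂ :=
  (N : ℂ)⁻¹ * Matrix.trace (resG E N z ω)

/-- The control parameter `Π(z) = √(Im m(z)/(Mη)) + 1/(Mη)`. -/
def PiCtrl (E : MatrixEnsemble) (N : ℕ) (z : ℂ) : ℝ :=
  Real.sqrt ((msc z).im / (Mpar E N * z.im)) + 1 / (Mpar E N * z.im)

/-- `Λ_o = max_{i≠j} |G_ij|`. -/
def LambdaO (E : MatrixEnsemble) (N : ℕ) (z : ℂ) (ω : E.Ω N) : ℝ :=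
  ⨆ i, ⨆ j, if i ≠ j then ‖resG E N z ω i j‖ else 0

/-- `Λ_d = max_i |G_ii - m|`. -/
def LambdaD (E : MatrixEnsemble) (N : ℕ) (z : ℂ) (ω : E.Ω N) : ℝ :=
  ⨆ i, ‖resG E N z ω i i - msc z‖

/-- `Λ = max (Λ_o, Λ_d)`. -/
def Lambda (E : MatrixEnsemble) (N : ℕ) (z : ℂ) (ω : E.Ω N) : ℝ :=
  max (LambdaO E N z ω) (LambdaD E N z ω)

/-- `Θ = |m_N - m|`. -/
def Theta (E : MatrixEnsemble) (N : ℕ) (z : ℂ) (ω : E.Ω N) : ℝ :=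
  ‖mN E N z ω - msc z‖

/-- Stochastic domination `X ≺ Y`, uniformly over the parameter sets `T N`:
for every `ε, D > 0` there is `N₀` such that for all `N ≥ N₀` and all parameters `u ∈ T N`,
`P[X > N^ε Y] ≤ N^{-D}`. -/
def StochDom {Ω : ℕ → Type} [∀ N, MeasurableSpace (Ω N)] (P : ∀ N, Measure (Ω N))
    {U : ℕ → Type} (T : ∀ N, Set (U N)) (X Y : ∀ N, U N → Ω N → ℝ) : Prop :=
  ∀ ε > (0:ℝ), ∀ D > (0:ℝ), ∃ N₀ : ℕ, ∀ N, N₀ ≤ N → ∀ u ∈ T N,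
    P N { ω | (N : ℝ) ^ ε * Y N u ω < X N u ω } ≤ ENNReal.ofReal ((N : ℝ) ^ (-D))

/-- `η̃_E`, the lower edge of the spectral domain `S̃` (defined via `Γ̃`). -/
def etaTilde (E : MatrixEnsemble) (γ : ℝ) (N : ℕ) (Ee : ℝ) : ℝ :=
  sInf { η : ℝ | 0 < η ∧ ∀ η' ∈ Set.Icc η (10:ℝ),
    1 / (Mpar E N * η') ≤
      min (Mpar E N ^ (-γ) / GammaTilde (sMat E N) (Ee + η' * Complex.I) ^ 3)
        (Mpar E N ^ (-2*γ) /
          (GammaTilde (sMat E N) (Ee + η' * Complex.I) ^ 4 * (msc (Ee + η' * Complex.I)).im)) }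

/-- The spectral domain `S̃`. -/
def domSTilde (E : MatrixEnsemble) (γ : ℝ) (N : ℕ) : Set ℂ :=
  { z | |z.re| ≤ 10 ∧ etaTilde E γ N z.re ≤ z.im ∧ z.im ≤ 10 }

/-- `η_E`, the lower edge of the spectral domain `S` (defined via `Γ`). -/
def etaS (E : MatrixEnsemble) (γ : ℝ) (N : ℕ) (Ee : ℝ) : ℝ :=
  sInf { η : ℝ | 0 < η ∧ ∀ η' ∈ Set.Icc η (10:ℝ),
    1 / (Mpar E N * η') ≤
      min (Mpar E N ^ (-γ) / Gamma (sMat E N) (Ee + η' * Complex.I) ^ 3)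
        (Mpar E N ^ (-2*γ) /
          (Gamma (sMat E N) (Ee + η' * Complex.I) ^ 4 * (msc (Ee + η' * Complex.I)).im)) }

/-- The spectral domain `S`. -/
def domS (E : MatrixEnsemble) (γ : ℝ) (N : ℕ) : Set ℂ :=
  { z | |z.re| ≤ 10 ∧ etaS E γ N z.re ≤ z.im ∧ z.im ≤ 10 }


/-- The minor `H^(T)`: the matrix with the rows and columns in `T` set to zero. -/
def minorMat {N : ℕ} (T : Finset (Fin N)) (A : Matrix (Fin N) (Fin N) ℂ) :
    Matrix (Fin N) (Fin N) ℂ :=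
  Matrix.of fun i j => if i ∈ T ∨ j ∈ T then 0 else A i j

/-- The resolvent `G^(T)(z) = (H^(T) - z)⁻¹` of a minor. -/
def minorResG (E : MatrixEnsemble) (N : ℕ) (T : Finset (Fin N)) (z : ℂ) (ω : E.Ω N) :
    Matrix (Fin N) (Fin N) ℂ :=
  (minorMat T (E.H N ω) - z • (1 : Matrix (Fin N) (Fin N) ℂ))⁻¹

/-- The σ-algebra generated by the minor `H^(k)`. -/
def minorSigma (E : MatrixEnsemble) (N : ℕ) (k : Fin N) : MeasurableSpace (E.Ω N) :=
  MeasurableSpace.comap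
    (fun ω => (fun i j => minorMat {k} (E.H N ω) i j : Fin N → Fin N → ℂ)) inferInstance

/-- The partial expectation `P_k X := E (X | H^(k))`. -/
def Pexp (E : MatrixEnsemble) (N : ℕ) (k : Fin N) (X : E.Ω N → ℂ) : E.Ω N → ℂ :=
  (E.P N)[X | minorSigma E N k]

/-- `Q_k X := X - P_k X`. -/
def Qexp (E : MatrixEnsemble) (N : ℕ) (k : Fin N) (X : E.Ω N → ℂ) : E.Ω N → ℂ :=
  fun ω => X ω - Pexp E N k X ω

/-- `Z_i := Q_i ∑_{k,l ≠ i} h_ik G^(i)_kl h_li`. -/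
def Zi (E : MatrixEnsemble) (N : ℕ) (i : Fin N) (z : ℂ) (ω : E.Ω N) : ℂ :=
  Qexp E N i (fun ω' => ∑ k ∈ Finset.univ.erase i, ∑ l ∈ Finset.univ.erase i,
    E.H N ω' i k * minorResG E N {i} z ω' k l * E.H N ω' l i) ω

/-- `A_i := ∑_k s_ik G_ik G_ki / G_ii`. -/
def Ai (E : MatrixEnsemble) (N : ℕ) (i : Fin N) (z : ℂ) (ω : E.Ω N) : ℂ :=
  ∑ k, (vVar E N i k : ℂ) * resG E N z ω i k * resG E N z ω k i / resG E N z ω i i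

/-- `Υ_i := A_i + h_ii - Z_i`. -/
def Upsi (E : MatrixEnsemble) (N : ℕ) (i : Fin N) (z : ℂ) (ω : E.Ω N) : ℂ :=
  Ai E N i z ω + E.H N ω i i - Zi E N i z ω

/-- `δ_-`: the largest `d` with `S ≥ -1 + d` (as a quadratic form), i.e. the distance
from `-1` to the spectrum of the symmetric doubly stochastic matrix `S`. -/
def deltaMinus {N : ℕ} (S : Matrix (Fin N) (Fin N) ℝ) : ℝ :=
  sSup { d : ℝ | ∀ v : Fin N → ℝ,
    (-1 + d) * ∑ i, v i ^ 2 ≤ ∑ i, v i * S.mulVec v i }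

/-- `δ_+`: the largest `d` with `S|_{e⊥} ≤ 1 - d`, i.e. the distance from `1` to the
spectrum of `S` restricted to the orthogonal complement of the constant vector. -/
def deltaPlus {N : ℕ} (S : Matrix (Fin N) (Fin N) ℝ) : ℝ :=
  sSup { d : ℝ | ∀ v : Fin N → ℝ, (∑ i, v i) = 0 →
    ∑ i, v i * S.mulVec v i ≤ (1 - d) * ∑ i, v i ^ 2 }

/-- The semicircle density `ϱ(x) = (2π)⁻¹ √((4 - x²)₊)`. -/
def rhoSc (x : ℝ) : ℝ := (2 * Real.pi)⁻¹ * Real.sqrt (max (4 - x ^ 2) 0)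

/-- The distribution function `n(E) = ∫_{-∞}^E ϱ(x) dx` of the semicircle law. -/
def nSc (Ee : ℝ) : ℝ := ∫ x in Set.Iic Ee, rhoSc x

/-- The operator norm of a Hermitian matrix: the largest absolute value of an eigenvalue. -/
def hermOpNorm {N : ℕ} {A : Matrix (Fin N) (Fin N) ℂ} (hA : A.IsHermitian) : ℝ :=
  ⨆ i, |hA.eigenvalues i|

/-- The empirical eigenvalue counting function `𝔫_N(E) = N⁻¹ #{α : λ_α ≤ E}`. -/
def countFn {N : ℕ} {A : Matrix (Fin N) (Fin N) ℂ} (hA : A.IsHermitian) (Ee : ℝ) : ℝ :=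
  (N : ℝ)⁻¹ * (Finset.univ.filter fun i => hA.eigenvalues i ≤ Ee).card

/-- The eigenvalues of a Hermitian matrix, sorted in nondecreasing order. -/
def sortedEigs {N : ℕ} {A : Matrix (Fin N) (Fin N) ℂ} (hA : A.IsHermitian) : Fin N → ℝ :=
  hA.eigenvalues ∘ Tuple.sort hA.eigenvalues

/-- The classical location `γ_α` of the `α`-th eigenvalue: `n(γ_α) = α/N`. -/
def gammaLoc (N : ℕ) (α : ℕ) : ℝ := sInf { x : ℝ | (α : ℝ) / (N : ℝ) ≤ nSc x }


/-! ### Auxiliary lemmas for the proof -/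

section Aux

open Real Set

lemma le_of_forall_pos_le_add' {a b : ℝ} (h : ∀ ε : ℝ, 0 < ε → a ≤ b + ε) : a ≤ b := by
  by_contra hc
  push_neg at hc
  have := h ((a - b) / 2) (by linarith)
  linarith

lemma rhoSc_nonneg (x : ℝ) : 0 ≤ rhoSc x := by
  unfold rhoSc
  positivity

lemma rhoSc_le (x : ℝ) : rhoSc x ≤ Real.pi⁻¹ := by
  unfold rhoSc
  have h1 : Real.sqrt (max (4 - x ^ 2) 0) ≤ 2 := by
    rw [show (2:ℝ) = Real.sqrt 4 by
      rw [show (4:ℝ) = 2 ^ 2 by norm_num, Real.sqrt_sq (by norm_num)]]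
    apply Real.sqrt_le_sqrt
    apply max_le (by nlinarith [sq_nonneg x]) (by norm_num)
  have h2 : (0:ℝ) < 2 * Real.pi := by positivity
  rw [show Real.pi⁻¹ = (2 * Real.pi)⁻¹ * 2 by
    field_simp]
  exact mul_le_mul_of_nonneg_left h1 (by positivity)

lemma rhoSc_zero' {x : ℝ} (hx : 4 - x ^ 2 ≤ 0) : rhoSc x = 0 := by
  unfold rhoSc
  rw [max_eq_right hx, Real.sqrt_zero, mul_zero]

lemma rhoSc_zero_of_le {x : ℝ} (hx : x ≤ -2) : rhoSc x = 0 :=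
  rhoSc_zero' (by nlinarith)

lemma rhoSc_zero_of_ge {x : ℝ} (hx : 2 ≤ x) : rhoSc x = 0 :=
  rhoSc_zero' (by nlinarith)

lemma rhoSc_zero {x : ℝ} (hx : x ∉ Icc (-2:ℝ) 2) : rhoSc x = 0 := by
  apply rhoSc_zero'
  simp only [mem_Icc, not_and_or, not_le] at hx
  rcases hx with h | h <;> nlinarith

lemma continuous_rhoSc : Continuous rhoSc := by
  unfold rhoSc
  exact continuous_const.mul (((continuous_const.sub (continuous_pow 2)).max
    continuous_const).sqrt)

lemma integrable_rhoSc : MeasureTheory.Integrable rhoSc := by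
  apply continuous_rhoSc.integrable_of_hasCompactSupport
  exact HasCompactSupport.intro isCompact_Icc fun x hx => rhoSc_zero hx

lemma nSc_sub (a b : ℝ) : nSc b - nSc a = ∫ x in a..b, rhoSc x :=
  intervalIntegral.integral_Iic_sub_Iic integrable_rhoSc.integrableOn integrable_rhoSc.integrableOn

lemma nSc_mono : Monotone nSc := by
  intro a b hab
  have h := nSc_sub a b
  have h2 : 0 ≤ ∫ x in a..b, rhoSc x :=
    intervalIntegral.integral_nonneg hab fun x _ => rhoSc_nonneg x
  linarith

lemma nSc_lipschitz {a b : ℝ} (hab : a ≤ b) : nSc b - nSc a ≤ (b - a) * Real.pi⁻¹ := by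
  rw [nSc_sub]
  calc ∫ x in a..b, rhoSc x ≤ ∫ _x in a..b, Real.pi⁻¹ := by
        apply intervalIntegral.integral_mono_on hab
          integrable_rhoSc.intervalIntegrable (intervalIntegrable_const)
        intro x _
        exact rhoSc_le x
    _ = (b - a) * Real.pi⁻¹ := by
        rw [intervalIntegral.integral_const, smul_eq_mul]

lemma nSc_nonneg (E : ℝ) : 0 ≤ nSc E :=
  MeasureTheory.setIntegral_nonneg measurableSet_Iic fun x _ => rhoSc_nonneg x

lemma nSc_neg_two : nSc (-2) = 0 := by
  unfold nSc
  rw [MeasureTheory.setIntegral_congr_fun measurableSet_Iic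
    (fun x hx => rhoSc_zero_of_le hx : Set.EqOn rhoSc (fun _ => (0:ℝ)) (Iic (-2:ℝ)))]
  simp

lemma nSc_zero_of_le {E : ℝ} (hE : E ≤ -2) : nSc E = 0 :=
  le_antisymm (nSc_neg_two ▸ nSc_mono hE) (nSc_nonneg E)

lemma integral_sqrt_shift {κ : ℝ} (hκ : 0 ≤ κ) :
    ∫ x in (-2:ℝ)..(-2+κ), Real.sqrt (x + 2) = 2 / 3 * κ ^ ((3:ℝ)/2) := by
  have h := intervalIntegral.integral_comp_add_right (a := (-2:ℝ)) (b := -2 + κ)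
    (f := fun x => Real.sqrt x) 2
  rw [show (-2:ℝ) + 2 = 0 by ring, show (-2:ℝ) + κ + 2 = κ by ring] at h
  rw [h]
  have hcong : ∀ x ∈ Set.uIcc (0:ℝ) κ, Real.sqrt x = x ^ ((1:ℝ)/2) := by
    intro x hx
    rw [Set.uIcc_of_le hκ] at hx
    exact Real.sqrt_eq_rpow x
  rw [intervalIntegral.integral_congr hcong, integral_rpow (Or.inl (by norm_num))]
  rw [Real.zero_rpow (by norm_num)]
  norm_num
  ring

lemma rhoSc_lower {x : ℝ} (h1 : -2 ≤ x) (h2 : x ≤ 1) :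
    (2 * Real.pi)⁻¹ * Real.sqrt (x + 2) ≤ rhoSc x := by
  unfold rhoSc
  apply mul_le_mul_of_nonneg_left _ (by positivity)
  apply Real.sqrt_le_sqrt
  refine le_trans ?_ (le_max_left _ _)
  nlinarith

lemma rhoSc_upper {x : ℝ} (h1 : -2 ≤ x) :
    rhoSc x ≤ Real.pi⁻¹ * Real.sqrt (x + 2) := by
  unfold rhoSc
  have key : Real.sqrt (max (4 - x ^ 2) 0) ≤ 2 * Real.sqrt (x + 2) := by
    rw [show 2 * Real.sqrt (x + 2) = Real.sqrt (4 * (x + 2)) by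
      rw [Real.sqrt_mul (by norm_num), show (4:ℝ) = 2 ^ 2 by norm_num,
        Real.sqrt_sq (by norm_num)]]
    apply Real.sqrt_le_sqrt
    apply max_le (by nlinarith) (by nlinarith)
  calc (2 * Real.pi)⁻¹ * Real.sqrt (max (4 - x ^ 2) 0)
      ≤ (2 * Real.pi)⁻¹ * (2 * Real.sqrt (x + 2)) :=
        mul_le_mul_of_nonneg_left key (by positivity)
    _ = Real.pi⁻¹ * Real.sqrt (x + 2) := by
        field_simp

lemma nSc_eq_int {κ : ℝ} : nSc (-2 + κ) = ∫ x in (-2:ℝ)..(-2+κ), rhoSc x := by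
  have := nSc_sub (-2) (-2 + κ)
  rw [nSc_neg_two] at this
  linarith

lemma nSc_upper {κ : ℝ} (hκ : 0 ≤ κ) :
    nSc (-2 + κ) ≤ 2 / (3 * Real.pi) * κ ^ ((3:ℝ)/2) := by
  rw [nSc_eq_int]
  calc ∫ x in (-2:ℝ)..(-2+κ), rhoSc x
      ≤ ∫ x in (-2:ℝ)..(-2+κ), Real.pi⁻¹ * Real.sqrt (x + 2) := by
        apply intervalIntegral.integral_mono_on (by linarith)
          integrable_rhoSc.intervalIntegrable
        · exact ((continuous_const.mul ((continuous_id.add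
            continuous_const).sqrt))).intervalIntegrable _ _
        · intro x hx
          exact rhoSc_upper (by exact le_trans (by norm_num) hx.1)
    _ = Real.pi⁻¹ * ∫ x in (-2:ℝ)..(-2+κ), Real.sqrt (x + 2) := by
        rw [intervalIntegral.integral_const_mul]
    _ = 2 / (3 * Real.pi) * κ ^ ((3:ℝ)/2) := by
        rw [integral_sqrt_shift hκ]
        have hπ : Real.pi ≠ 0 := Real.pi_ne_zero
        field_simp

lemma nSc_lower {κ : ℝ} (hκ : 0 ≤ κ) (hκ3 : κ ≤ 3) :
    1 / (3 * Real.pi) * κ ^ ((3:ℝ)/2) ≤ nSc (-2 + κ) := by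
  rw [nSc_eq_int]
  calc 1 / (3 * Real.pi) * κ ^ ((3:ℝ)/2)
      = (2 * Real.pi)⁻¹ * ∫ x in (-2:ℝ)..(-2+κ), Real.sqrt (x + 2) := by
        rw [integral_sqrt_shift hκ]
        have hπ : Real.pi ≠ 0 := Real.pi_ne_zero
        field_simp
    _ = ∫ x in (-2:ℝ)..(-2+κ), (2 * Real.pi)⁻¹ * Real.sqrt (x + 2) := by
        rw [intervalIntegral.integral_const_mul]
    _ ≤ ∫ x in (-2:ℝ)..(-2+κ), rhoSc x := by
        apply intervalIntegral.integral_mono_on (by linarith)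
        · exact ((continuous_const.mul ((continuous_id.add
            continuous_const).sqrt))).intervalIntegrable _ _
        · exact integrable_rhoSc.intervalIntegrable
        · intro x hx
          exact rhoSc_lower hx.1 (by linarith [hx.2])

lemma nSc_diff_lower {E E' : ℝ} (h1 : -2 ≤ E) (h2 : E ≤ E') (h3 : E' ≤ 1) :
    (2 * Real.pi)⁻¹ * Real.sqrt (E + 2) * (E' - E) ≤ nSc E' - nSc E := by
  rw [nSc_sub]
  calc (2 * Real.pi)⁻¹ * Real.sqrt (E + 2) * (E' - E)
      = ∫ _x in E..E', (2 * Real.pi)⁻¹ * Real.sqrt (E + 2) := by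
        rw [intervalIntegral.integral_const, smul_eq_mul]
        ring
    _ ≤ ∫ x in E..E', rhoSc x := by
        apply intervalIntegral.integral_mono_on h2 intervalIntegrable_const
          integrable_rhoSc.intervalIntegrable
        intro x hx
        calc (2 * Real.pi)⁻¹ * Real.sqrt (E + 2)
            ≤ (2 * Real.pi)⁻¹ * Real.sqrt (x + 2) := by
              apply mul_le_mul_of_nonneg_left (Real.sqrt_le_sqrt (by linarith [hx.1]))
                (by positivity)
          _ ≤ rhoSc x := rhoSc_lower (by linarith [hx.1]) (by linarith [hx.2])

lemma nSc_two : nSc 2 = 1 := by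
  have h : nSc 2 = ∫ x in (-2:ℝ)..(2:ℝ), rhoSc x := by
    have := nSc_sub (-2) 2
    rw [nSc_neg_two] at this
    linarith
  rw [h]
  have hcong : ∀ x ∈ Set.uIcc (-2:ℝ) 2,
      rhoSc x = (2 * Real.pi)⁻¹ * (2 * Real.sqrt (1 - (x / 2) ^ 2)) := by
    intro x hx
    rw [Set.uIcc_of_le (by norm_num)] at hx
    obtain ⟨hx1, hx2⟩ := hx
    unfold rhoSc
    congr 1
    rw [max_eq_left (by nlinarith)]
    rw [show (4:ℝ) - x ^ 2 = 4 * (1 - (x/2)^2) by ring]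
    rw [Real.sqrt_mul (by norm_num), show (4:ℝ) = 2 ^ 2 by norm_num,
      Real.sqrt_sq (by norm_num)]
  rw [intervalIntegral.integral_congr hcong]
  rw [intervalIntegral.integral_const_mul]
  have hdiv := intervalIntegral.integral_comp_div (a := (-2:ℝ)) (b := 2)
    (c := (2:ℝ)) (f := fun u => 2 * Real.sqrt (1 - u ^ 2)) (by norm_num)
  rw [show (-2:ℝ)/2 = -1 by norm_num, show (2:ℝ)/2 = 1 by norm_num] at hdiv
  rw [hdiv, intervalIntegral.integral_const_mul, integral_sqrt_one_sub_sq]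
  have hπ : Real.pi ≠ 0 := Real.pi_ne_zero
  field_simp
  norm_num

lemma nSc_of_ge {E : ℝ} (hE : 2 ≤ E) : nSc E = 1 := by
  have h := nSc_sub 2 E
  have hz : (∫ x in (2:ℝ)..E, rhoSc x) = 0 := by
    have hcong : ∀ x ∈ Set.uIcc (2:ℝ) E, rhoSc x = (fun _ => (0:ℝ)) x := by
      intro x hx
      rw [Set.uIcc_of_le hE] at hx
      exact rhoSc_zero_of_ge hx.1
    rw [intervalIntegral.integral_congr hcong]
    simp
  rw [hz] at h
  rw [nSc_two] at h
  linarith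

lemma nSc_le_one (E : ℝ) : nSc E ≤ 1 := by
  rcases le_total E 2 with h | h
  · rw [← nSc_two]
    exact nSc_mono h
  · rw [nSc_of_ge h]

lemma rhoSc_even (x : ℝ) : rhoSc (-x) = rhoSc x := by
  unfold rhoSc
  rw [show (-x) ^ 2 = x ^ 2 by ring]

lemma integral_rhoSc_total : ∫ x, rhoSc x = 1 := by
  have h := intervalIntegral.integral_Iic_add_Ioi (b := (2:ℝ))
    integrable_rhoSc.integrableOn integrable_rhoSc.integrableOn
  have h1 : (∫ x in Iic (2:ℝ), rhoSc x) = 1 := nSc_two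
  have h2 : (∫ x in Ioi (2:ℝ), rhoSc x) = 0 := by
    rw [MeasureTheory.setIntegral_congr_fun measurableSet_Ioi
      (fun x hx => rhoSc_zero_of_ge (le_of_lt hx) :
        Set.EqOn rhoSc (fun _ => (0:ℝ)) (Ioi (2:ℝ)))]
    simp
  rw [h1, h2] at h
  linarith

lemma nSc_symm (E : ℝ) : nSc (-E) = 1 - nSc E := by
  have key : nSc E = ∫ x in Ioi (-E), rhoSc x := by
    have h := integral_comp_neg_Iic E rhoSc
    have hcong : (∫ x in Iic E, rhoSc (-x)) = ∫ x in Iic E, rhoSc x := by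
      apply MeasureTheory.setIntegral_congr_fun measurableSet_Iic
      intro x _
      exact rhoSc_even x
    rw [hcong] at h
    exact h
  have h2 := intervalIntegral.integral_Iic_add_Ioi (b := (-E:ℝ))
    integrable_rhoSc.integrableOn integrable_rhoSc.integrableOn
  rw [integral_rhoSc_total] at h2
  have : nSc (-E) + nSc E = 1 := by
    rw [key]
    exact h2
  linarith

lemma nSc_one : 0.551 ≤ nSc 1 := by
  have h := nSc_lower (κ := 3) (by norm_num) (by norm_num)
  rw [show (-2:ℝ) + 3 = 1 by norm_num] at h
  have h3 : (3:ℝ) ^ ((3:ℝ)/2) = 3 * Real.sqrt 3 := by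
    rw [show (3:ℝ)/2 = 1 + 1/2 by norm_num, Real.rpow_add (by norm_num), Real.rpow_one,
      ← Real.sqrt_eq_rpow]
  rw [h3] at h
  have hs : (1.732:ℝ) ≤ Real.sqrt 3 :=
    (Real.le_sqrt (by norm_num) (by norm_num)).mpr (by norm_num)
  have hπ : Real.pi < 3.1416 := Real.pi_lt_d4
  have hπ0 : 0 < Real.pi := Real.pi_pos
  have : (0.551:ℝ) ≤ 1 / (3 * Real.pi) * (3 * Real.sqrt 3) := by
    rw [div_mul_eq_mul_div, le_div_iff₀ (by positivity)]
    nlinarith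
  linarith


lemma rpow_three_halves_inv {x : ℝ} (hx : 0 ≤ x) :
    (x ^ ((3:ℝ)/2)) ^ ((2:ℝ)/3) = x := by
  rw [← Real.rpow_mul hx]
  norm_num

lemma rpow_two_thirds_inv {x : ℝ} (hx : 0 ≤ x) :
    (x ^ ((2:ℝ)/3)) ^ ((3:ℝ)/2) = x := by
  rw [← Real.rpow_mul hx]
  norm_num

lemma claim_kappa {x P : ℝ} (hP : 0 ≤ P) (hP54 : P ≤ 0.54) (hx : -2 ≤ x)
    (hn : nSc x ≤ P) : x ≤ -2 + (3 * Real.pi * P) ^ ((2:ℝ)/3) := by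
  by_contra hcon
  push_neg at hcon
  have hπ := Real.pi_pos
  have h3P : (0:ℝ) ≤ 3 * Real.pi * P := by positivity
  have h0 : 0 ≤ (3 * Real.pi * P) ^ ((2:ℝ)/3) := Real.rpow_nonneg h3P _
  rcases le_or_gt 1 x with h1 | h1
  · have hm := nSc_mono h1
    have ho := nSc_one
    linarith
  · have hκpos : (0:ℝ) ≤ x + 2 := by linarith
    have hκ3 : x + 2 ≤ 3 := by linarith
    have hgt : (3 * Real.pi * P) ^ ((2:ℝ)/3) < x + 2 := by linarith
    have hlow := nSc_lower hκpos hκ3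
    rw [show -2 + (x + 2) = x by ring] at hlow
    have hstrict := Real.rpow_lt_rpow h0 hgt (by norm_num : (0:ℝ) < (3:ℝ)/2)
    rw [rpow_two_thirds_inv h3P] at hstrict
    have h3π : (0:ℝ) < 3 * Real.pi := by positivity
    have hfin : P < 1 / (3 * Real.pi) * (x + 2) ^ ((3:ℝ)/2) := by
      rw [show (1:ℝ)/(3*Real.pi) * (x+2) ^ ((3:ℝ)/2) = (x+2) ^ ((3:ℝ)/2) / (3*Real.pi) by ring,
        lt_div_iff₀ h3π]
      nlinarith
    linarith

lemma nSc_kappa_lb {x v : ℝ} (hv : 0 ≤ v) (hx2 : -2 ≤ x) (hvx : v ≤ nSc x) :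
    (3 * Real.pi / 2 * v) ^ ((2:ℝ)/3) ≤ x + 2 := by
  have hκ0 : (0:ℝ) ≤ x + 2 := by linarith
  have hup := nSc_upper hκ0
  rw [show -2 + (x + 2) = x by ring] at hup
  have hπ := Real.pi_pos
  have hκ32 : 0 ≤ (x + 2) ^ ((3:ℝ)/2) := Real.rpow_nonneg hκ0 _
  have h1 : 3 * Real.pi / 2 * v ≤ (x + 2) ^ ((3:ℝ)/2) := by
    have h2 : v ≤ 2 / (3 * Real.pi) * (x + 2) ^ ((3:ℝ)/2) := by linarith
    have h3π : (0:ℝ) < 3 * Real.pi := by positivity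
    rw [div_mul_eq_mul_div, le_div_iff₀ h3π] at h2
    nlinarith
  calc (3 * Real.pi / 2 * v) ^ ((2:ℝ)/3)
      ≤ ((x + 2) ^ ((3:ℝ)/2)) ^ ((2:ℝ)/3) :=
        Real.rpow_le_rpow (by positivity) h1 (by norm_num)
    _ = x + 2 := rpow_three_halves_inv hκ0

set_option maxHeartbeats 1000000 in
lemma bulk_lower {a B lam gam : ℝ} (hB : 0 ≤ B) (ha : 0 < a) (ha51 : a ≤ 0.51)
    (hBa : 20 * B ≤ a) (hgam : nSc gam = a) (hlam : |nSc lam - a| ≤ B) :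
    |lam - gam| * a ^ ((1:ℝ)/3) ≤ 7 * B := by
  rw [abs_le] at hlam
  have hπ3 := Real.pi_gt_three
  have hπ4 : Real.pi < 3.1416 := Real.pi_lt_d4
  have hπ := Real.pi_pos
  have hone := nSc_one
  have hlam1 : lam ≤ 1 := by
    by_contra hc; push_neg at hc
    have := nSc_mono (le_of_lt hc)
    linarith [hlam.2]
  have hgam1 : gam ≤ 1 := by
    by_contra hc; push_neg at hc
    have := nSc_mono (le_of_lt hc)
    linarith
  have hlam2 : -2 ≤ lam := by
    by_contra hc; push_neg at hc
    have hz := nSc_zero_of_le (le_of_lt hc)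
    linarith [hlam.1]
  have hgam2 : -2 ≤ gam := by
    by_contra hc; push_neg at hc
    have hz := nSc_zero_of_le (le_of_lt hc)
    linarith
  have hkl : a ^ ((2:ℝ)/3) ≤ lam + 2 := by
    refine le_trans ?_ (nSc_kappa_lb (v := a - B) (by linarith) hlam2 (by linarith [hlam.1]))
    exact Real.rpow_le_rpow ha.le (by nlinarith) (by norm_num)
  have hkg : a ^ ((2:ℝ)/3) ≤ gam + 2 := by
    refine le_trans ?_ (nSc_kappa_lb (v := a) ha.le hgam2 (le_of_eq hgam.symm))
    exact Real.rpow_le_rpow ha.le (by nlinarith) (by norm_num)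
  have hsq : ∀ y : ℝ, a ^ ((2:ℝ)/3) ≤ y + 2 → a ^ ((1:ℝ)/3) ≤ Real.sqrt (y + 2) := by
    intro y hy
    rw [show a ^ ((1:ℝ)/3) = Real.sqrt (a ^ ((2:ℝ)/3)) by
      rw [Real.sqrt_eq_rpow, ← Real.rpow_mul ha.le]; norm_num]
    exact Real.sqrt_le_sqrt hy
  have ha13 : 0 ≤ a ^ ((1:ℝ)/3) := Real.rpow_nonneg ha.le _
  have h2π : (0:ℝ) < 2 * Real.pi := by positivity
  rcases le_total lam gam with hlg | hlg
  · have hdiff := nSc_diff_lower hlam2 hlg hgam1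
    have h1 := hsq lam hkl
    have h2 : nSc gam - nSc lam ≤ B := by rw [hgam]; linarith [hlam.1]
    have h3 : (2 * Real.pi)⁻¹ * (a ^ ((1:ℝ)/3) * (gam - lam)) ≤ B := by
      calc (2 * Real.pi)⁻¹ * (a ^ ((1:ℝ)/3) * (gam - lam))
          ≤ (2 * Real.pi)⁻¹ * (Real.sqrt (lam + 2) * (gam - lam)) := by
            apply mul_le_mul_of_nonneg_left _ (by positivity)
            exact mul_le_mul_of_nonneg_right h1 (by linarith)
        _ = (2 * Real.pi)⁻¹ * Real.sqrt (lam + 2) * (gam - lam) := by ring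
        _ ≤ nSc gam - nSc lam := hdiff
        _ ≤ B := h2
    have h4 : a ^ ((1:ℝ)/3) * (gam - lam) ≤ 2 * Real.pi * B :=
      (inv_mul_le_iff₀ h2π).mp h3
    have habs : |lam - gam| = gam - lam := by
      rw [abs_of_nonpos (by linarith)]; ring
    rw [habs]
    nlinarith
  · have hdiff := nSc_diff_lower hgam2 hlg hlam1
    have h1 := hsq gam hkg
    have h2 : nSc lam - nSc gam ≤ B := by rw [hgam]; linarith [hlam.2]
    have h3 : (2 * Real.pi)⁻¹ * (a ^ ((1:ℝ)/3) * (lam - gam)) ≤ B := by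
      calc (2 * Real.pi)⁻¹ * (a ^ ((1:ℝ)/3) * (lam - gam))
          ≤ (2 * Real.pi)⁻¹ * (Real.sqrt (gam + 2) * (lam - gam)) := by
            apply mul_le_mul_of_nonneg_left _ (by positivity)
            exact mul_le_mul_of_nonneg_right h1 (by linarith)
        _ = (2 * Real.pi)⁻¹ * Real.sqrt (gam + 2) * (lam - gam) := by ring
        _ ≤ nSc lam - nSc gam := hdiff
        _ ≤ B := h2
    have h4 : a ^ ((1:ℝ)/3) * (lam - gam) ≤ 2 * Real.pi * B :=
      (inv_mul_le_iff₀ h2π).mp h3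
    have habs : |lam - gam| = lam - gam := abs_of_nonneg (by linarith)
    rw [habs]
    nlinarith

lemma edge_coeff : (3 * Real.pi) ^ ((2:ℝ)/3) ≤ 5 := by
  have hs : (2.2:ℝ) ≤ Real.sqrt 5 := (Real.le_sqrt (by norm_num) (by norm_num)).mpr (by norm_num)
  have h5 : (3 * Real.pi : ℝ) ≤ 5 ^ ((3:ℝ)/2) := by
    have hv : (5:ℝ) ^ ((3:ℝ)/2) = 5 * Real.sqrt 5 := by
      rw [show (3:ℝ)/2 = 1 + 1/2 by norm_num, Real.rpow_add (by norm_num), Real.rpow_one,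
        ← Real.sqrt_eq_rpow]
    rw [hv]
    nlinarith [Real.pi_lt_d4]
  calc (3 * Real.pi) ^ ((2:ℝ)/3) ≤ ((5:ℝ) ^ ((3:ℝ)/2)) ^ ((2:ℝ)/3) :=
        Real.rpow_le_rpow (by positivity) h5 (by norm_num)
    _ = 5 := rpow_three_halves_inv (by norm_num)

lemma edge_lower {P W lam gam : ℝ} (hP : 0 ≤ P) (hP54 : P ≤ 0.54) (hW : 0 ≤ W)
    (hg2 : -2 ≤ gam) (hg : nSc gam ≤ P) (hl : nSc lam ≤ P) (hlW : -2 - W ≤ lam) :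
    |lam - gam| ≤ W + 5 * P ^ ((2:ℝ)/3) := by
  have hπ := Real.pi_pos
  have hgu := claim_kappa hP hP54 hg2 hg
  have h0 : 0 ≤ (3 * Real.pi * P) ^ ((2:ℝ)/3) := Real.rpow_nonneg (by positivity) _
  have hlu : lam ≤ -2 + (3 * Real.pi * P) ^ ((2:ℝ)/3) := by
    rcases le_or_gt (-2) lam with h | h
    · exact claim_kappa hP hP54 h hl
    · linarith
  have hcoeff : (3 * Real.pi * P) ^ ((2:ℝ)/3) ≤ 5 * P ^ ((2:ℝ)/3) := by
    rw [Real.mul_rpow (by positivity) hP]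
    exact mul_le_mul_of_nonneg_right edge_coeff (Real.rpow_nonneg hP _)
  have hPnn : 0 ≤ P ^ ((2:ℝ)/3) := Real.rpow_nonneg hP _
  rw [abs_le]
  constructor
  · linarith
  · linarith

section Counting

variable {N : ℕ} {A : Matrix (Fin N) (Fin N) ℂ} (hA : A.IsHermitian)

lemma countFn_nonneg (Ee : ℝ) : 0 ≤ countFn hA Ee := by
  unfold countFn
  positivity

lemma countFn_le_one (hN : 0 < N) (Ee : ℝ) : countFn hA Ee ≤ 1 := by
  unfold countFn
  have hcard : ((Finset.univ.filter fun i => hA.eigenvalues i ≤ Ee).card : ℝ) ≤ N := by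
    have := Finset.card_filter_le (Finset.univ : Finset (Fin N))
      (fun i => hA.eigenvalues i ≤ Ee)
    have h2 : (Finset.univ : Finset (Fin N)).card = N := by
      rw [Finset.card_univ, Fintype.card_fin]
    exact_mod_cast h2 ▸ this
  have hNpos : (0:ℝ) < N := by exact_mod_cast hN
  calc (N:ℝ)⁻¹ * ((Finset.univ.filter fun i => hA.eigenvalues i ≤ Ee).card : ℝ)
      ≤ (N:ℝ)⁻¹ * N := mul_le_mul_of_nonneg_left hcard (by positivity)
    _ = 1 := by field_simp

lemma countFn_ge_self (α : Fin N) :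
    ((α : ℕ) + 1 : ℝ) / N ≤ countFn hA (sortedEigs hA α) := by
  have hNpos : (0:ℝ) < N := by
    have := α.isLt
    exact_mod_cast Nat.pos_of_ne_zero (by omega)
  have hcard : (α : ℕ) + 1 ≤ (Finset.univ.filter
      fun i => hA.eigenvalues i ≤ sortedEigs hA α).card := by
    have h := Finset.card_le_card_of_injOn (f := ⇑(Tuple.sort hA.eigenvalues))
      (s := Finset.Iic α)
      (t := Finset.univ.filter fun i => hA.eigenvalues i ≤ sortedEigs hA α)
      ?_ ((Tuple.sort hA.eigenvalues).injective.injOn)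
    · rwa [Fin.card_Iic] at h
    · intro β hβ
      rw [Finset.mem_coe, Finset.mem_filter]
      exact ⟨Finset.mem_univ _, Tuple.monotone_sort hA.eigenvalues (Finset.mem_Iic.mp hβ)⟩
  unfold countFn
  rw [inv_mul_eq_div]
  apply div_le_div_of_nonneg_right ?_ hNpos.le
  exact_mod_cast hcard

lemma countFn_le_below (α : Fin N) {Ee : ℝ} (hE : Ee < sortedEigs hA α) :
    countFn hA Ee ≤ ((α : ℕ) : ℝ) / N := by
  classical
  have hNpos : (0:ℝ) < N := by
    have := α.isLt
    exact_mod_cast Nat.pos_of_ne_zero (by omega)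
  unfold countFn
  set fil := Finset.univ.filter fun i => hA.eigenvalues i ≤ Ee with hfil
  set T := (Finset.Ici α).image ⇑(Tuple.sort hA.eigenvalues) with hT
  have hTcard : T.card = N - (α : ℕ) := by
    rw [hT, Finset.card_image_of_injective _ (Tuple.sort hA.eigenvalues).injective,
      Fin.card_Ici]
  have hdisj : Disjoint fil T := by
    rw [Finset.disjoint_right]
    intro i hiT hifil
    rw [hT, Finset.mem_image] at hiT
    obtain ⟨β, hβ, rfl⟩ := hiT
    rw [hfil, Finset.mem_filter] at hifil
    have hmono : sortedEigs hA α ≤ hA.eigenvalues (Tuple.sort hA.eigenvalues β) :=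
      Tuple.monotone_sort hA.eigenvalues (Finset.mem_Ici.mp hβ)
    linarith [hifil.2]
  have hcard : fil.card ≤ (α : ℕ) := by
    have h1 : fil.card + T.card ≤ N := by
      rw [← Finset.card_union_of_disjoint hdisj]
      calc (fil ∪ T).card ≤ (Finset.univ : Finset (Fin N)).card := Finset.card_le_univ _
        _ = N := by rw [Finset.card_univ, Fintype.card_fin]
    have h2 := α.isLt
    omega
  rw [inv_mul_eq_div]
  apply div_le_div_of_nonneg_right ?_ hNpos.le
  exact_mod_cast hcard

lemma abs_sortedEigs_le (α : Fin N) : |sortedEigs hA α| ≤ hermOpNorm hA := by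
  have h := le_ciSup (f := fun i : Fin N => |hA.eigenvalues i|)
    (Set.Finite.bddAbove (Set.finite_range _)) (Tuple.sort hA.eigenvalues α)
  exact h

lemma countFn_top (hN : 0 < N) :
    countFn hA (sortedEigs hA ⟨N - 1, by omega⟩) = 1 := by
  unfold countFn
  have hfil : (Finset.univ.filter
      fun i => hA.eigenvalues i ≤ sortedEigs hA ⟨N - 1, by omega⟩) = Finset.univ := by
    apply Finset.filter_true_of_mem
    intro i _
    have hrw : hA.eigenvalues i =
        (hA.eigenvalues ∘ Tuple.sort hA.eigenvalues) ((Tuple.sort hA.eigenvalues).symm i) := by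
      simp
    rw [hrw]
    apply Tuple.monotone_sort hA.eigenvalues
    have hi := ((Tuple.sort hA.eigenvalues).symm i).isLt
    have hval : ((⟨N - 1, by omega⟩ : Fin N) : ℕ) = N - 1 := rfl
    exact Fin.le_def.mpr (by omega)
  rw [hfil, Finset.card_univ, Fintype.card_fin]
  have hNpos : (0:ℝ) < N := by exact_mod_cast hN
  field_simp

set_option maxHeartbeats 1000000 in
lemma dev_lower (hN : 0 < N) :
    1 / (2 * N) ≤ ⨆ Ee : ℝ, |countFn hA Ee - nSc Ee| := by
  set s := ⨆ Ee : ℝ, |countFn hA Ee - nSc Ee| with hsdef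
  have hbdd : BddAbove (Set.range fun Ee => |countFn hA Ee - nSc Ee|) := by
    refine ⟨2, ?_⟩
    rintro _ ⟨Ee, rfl⟩
    have h1 := countFn_nonneg hA Ee
    have h2 := countFn_le_one hA hN Ee
    have h3 := nSc_nonneg Ee
    have h4 := nSc_le_one Ee
    rw [abs_le]
    constructor <;> linarith
  have hle : ∀ Ee, |countFn hA Ee - nSc Ee| ≤ s := fun Ee => le_ciSup hbdd Ee
  set lst : Fin N := ⟨N - 1, by omega⟩ with hlst
  set t := sortedEigs hA lst with ht
  have h1 : countFn hA t = 1 := countFn_top hA hN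
  have hNpos : (0:ℝ) < N := by exact_mod_cast hN
  have key : ∀ θ : ℝ, 0 < θ → 1 / (N:ℝ) ≤ 2 * s + θ * Real.pi⁻¹ := by
    intro θ hθ
    have h2 : countFn hA (t - θ) ≤ ((N:ℝ) - 1) / N := by
      have hc := countFn_le_below hA lst (show t - θ < sortedEigs hA lst by
        rw [← ht]; linarith)
      have hcast : (((lst : Fin N) : ℕ) : ℝ) = (N:ℝ) - 1 := by
        rw [hlst]
        push_cast [Nat.cast_sub (by omega : 1 ≤ N)]
        ring
      rwa [hcast] at hc
    have e1 := hle t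
    have e2 := hle (t - θ)
    have e3 := nSc_lipschitz (show t - θ ≤ t by linarith)
    rw [h1] at e1
    rw [abs_le] at e1 e2
    have hdiv : ((N:ℝ) - 1)/N = 1 - 1/N := by field_simp
    rw [hdiv] at h2
    have hπ : (0:ℝ) < Real.pi⁻¹ := by positivity
    nlinarith [e1.1, e2.1, e2.2]
  have hfin : 1 / (N:ℝ) ≤ 2 * s := by
    apply le_of_forall_pos_le_add'
    intro ε hε
    have hk := key (ε * Real.pi) (by positivity)
    have hval : ε * Real.pi * Real.pi⁻¹ = ε := by
      field_simp
    rw [hval] at hk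
    exact hk
  rw [show 1 / (2 * (N:ℝ)) = (1 / (N:ℝ)) / 2 by ring]
  linarith

end Counting

lemma gammaLoc_spec {N αn : ℕ} (hN : 0 < N) (hα : 0 < αn) (hαN : αn ≤ N) :
    nSc (gammaLoc N αn) = (αn : ℝ) / N ∧ -2 ≤ gammaLoc N αn ∧ gammaLoc N αn ≤ 2 := by
  have hNpos : (0:ℝ) < N := by exact_mod_cast hN
  have hπ := Real.pi_pos
  set a : ℝ := (αn : ℝ) / N with ha
  have ha0 : 0 < a := div_pos (by exact_mod_cast hα) hNpos
  have ha1 : a ≤ 1 := by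
    rw [ha, div_le_one hNpos]
    exact_mod_cast hαN
  set S : Set ℝ := {x : ℝ | a ≤ nSc x} with hS
  have h2S : (2:ℝ) ∈ S := by
    rw [hS]
    simp only [Set.mem_setOf_eq, nSc_two]
    exact ha1
  have hne : S.Nonempty := ⟨2, h2S⟩
  have hlb : ∀ x ∈ S, -2 ≤ x := by
    intro x hx
    by_contra hc
    push_neg at hc
    have hz := nSc_zero_of_le (le_of_lt hc)
    rw [hS, Set.mem_setOf_eq, hz] at hx
    linarith
  have hbdd : BddBelow S := ⟨-2, hlb⟩
  have hgl : gammaLoc N αn = sInf S := rfl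
  refine ⟨le_antisymm ?_ ?_, ?_, ?_⟩
  · apply le_of_forall_pos_le_add'
    intro ε hε
    have hnot : sInf S - ε * Real.pi ∉ S := by
      intro hmem
      have := csInf_le hbdd hmem
      nlinarith
    have hlt : nSc (sInf S - ε * Real.pi) < a := by
      by_contra hc
      push_neg at hc
      exact hnot hc
    have hlip := nSc_lipschitz (show sInf S - ε * Real.pi ≤ sInf S by nlinarith)
    have hval : (sInf S - (sInf S - ε * Real.pi)) * Real.pi⁻¹ = ε := by
      field_simp
      ring
    rw [hval] at hlip
    rw [hgl]
    linarith
  · apply le_of_forall_pos_le_add'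
    intro ε hε
    obtain ⟨x, hxS, hxlt⟩ := Real.lt_sInf_add_pos hne (show (0:ℝ) < ε * Real.pi by positivity)
    have hge : sInf S ≤ x := csInf_le hbdd hxS
    have hlip := nSc_lipschitz hge
    have hax : a ≤ nSc x := hxS
    have h1 : (x - sInf S) * Real.pi⁻¹ ≤ ε := by
      have h2 : x - sInf S ≤ ε * Real.pi := by linarith
      calc (x - sInf S) * Real.pi⁻¹ ≤ ε * Real.pi * Real.pi⁻¹ :=
            mul_le_mul_of_nonneg_right h2 (by positivity)
        _ = ε := by field_simp
    rw [hgl]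
    linarith
  · rw [hgl]
    exact le_csInf hne hlb
  · rw [hgl]
    exact csInf_le hbdd h2S


lemma nSc_lam_bounds {N : ℕ} {A : Matrix (Fin N) (Fin N) ℂ} (hA : A.IsHermitian) (α : Fin N)
    {Z : ℝ} (hdev : ∀ Ee : ℝ, |countFn hA Ee - nSc Ee| ≤ Z) :
    |nSc (sortedEigs hA α) - (((α : ℕ) : ℝ) + 1) / N| ≤ Z + 1 / N := by
  have hNpos : (0:ℝ) < N := by
    have := α.isLt
    exact_mod_cast Nat.pos_of_ne_zero (by omega)
  have hπ := Real.pi_pos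
  have h1 := countFn_ge_self hA α
  have h2 := hdev (sortedEigs hA α)
  rw [abs_le] at h2
  have hZ0 : 0 ≤ Z := le_trans (abs_nonneg _) (hdev 0)
  have hinv : (0:ℝ) < 1 / (N:ℝ) := by positivity
  have hup : nSc (sortedEigs hA α) ≤ ((α:ℕ):ℝ)/N + Z := by
    apply le_of_forall_pos_le_add'
    intro θ hθ
    have hlt : sortedEigs hA α - θ * Real.pi < sortedEigs hA α := by nlinarith
    have h3 := countFn_le_below hA α hlt
    have h4 := hdev (sortedEigs hA α - θ * Real.pi)
    rw [abs_le] at h4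
    have h5 := nSc_lipschitz (show sortedEigs hA α - θ * Real.pi ≤ sortedEigs hA α by nlinarith)
    have hval : (sortedEigs hA α - (sortedEigs hA α - θ * Real.pi)) * Real.pi⁻¹ = θ := by
      field_simp
      ring
    rw [hval] at h5
    linarith [h4.1]
  rw [abs_le]
  constructor
  · linarith [h2.2]
  · have hcast : ((α:ℕ):ℝ)/N = (((α:ℕ):ℝ)+1)/N - 1/N := by ring
    rw [hcast] at hup
    linarith [hup]

set_option maxHeartbeats 1000000 in
lemma bulk_master {N : ℕ} {A : Matrix (Fin N) (Fin N) ℂ} (hA : A.IsHermitian) (α : Fin N)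
    {Z Ahat : ℝ}
    (hN50 : (50:ℝ) ≤ (N:ℝ))
    (hAhat : Ahat = ((min (α.val + 1) (N - α.val) : ℕ) : ℝ))
    (hZ0 : 0 < Z)
    (hdev : ∀ Ee : ℝ, |countFn hA Ee - nSc Ee| ≤ Z)
    (hZN : 1/(N:ℝ) ≤ 2*Z)
    (hkey : 240 * ((N:ℝ) * Z) ≤ Ahat) :
    |sortedEigs hA α - gammaLoc N (α.val + 1)| ≤ 42 * Z * ((N:ℝ)/Ahat) ^ ((1:ℝ)/3) := by
  have hNR0 : (0:ℝ) < (N:ℝ) := by linarith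
  have hN0 : 0 < N := by exact_mod_cast hNR0
  have hαN := α.isLt
  have hA1 : (1:ℝ) ≤ Ahat := by
    rw [hAhat]
    exact_mod_cast (by omega : 1 ≤ min (α.val + 1) (N - α.val))
  have hA0 : (0:ℝ) < Ahat := by linarith
  have hZNR : (1:ℝ)/2 ≤ (N:ℝ) * Z := by
    have h := mul_le_mul_of_nonneg_left hZN (le_of_lt hNR0)
    rw [show (N:ℝ) * (1/(N:ℝ)) = 1 by field_simp] at h
    linarith
  have hA120 : (120:ℝ) ≤ Ahat := by nlinarith
  have hB0 : (0:ℝ) < Z + 1/(N:ℝ) := by positivity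
  have hB3 : Z + 1/(N:ℝ) ≤ 3 * Z := by linarith
  have hnb := nSc_lam_bounds hA α hdev
  have hgspec := gammaLoc_spec hN0 (by omega : 0 < α.val + 1) (by omega : α.val + 1 ≤ N)
  have hgs1 : nSc (gammaLoc N (α.val + 1)) = (((α.val:ℕ):ℝ) + 1)/(N:ℝ) := by
    rw [hgspec.1]
    push_cast
    ring
  have hNZ0 : (0:ℝ) ≤ (N:ℝ) * Z := by positivity
  rcases le_or_gt (α.val + 1) (N - α.val) with hhalf | hhalf
  · -- lower half
    have hAeq : Ahat = ((α.val:ℕ):ℝ) + 1 := by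
      rw [hAhat, min_eq_left hhalf]
      push_cast
      ring
    have ha0 : (0:ℝ) < Ahat / (N:ℝ) := by positivity
    have hble : 20 * (Z + 1/(N:ℝ)) ≤ Ahat / (N:ℝ) := by
      rw [le_div_iff₀ hNR0]
      have hBN := mul_le_mul_of_nonneg_right hB3 hNR0.le
      nlinarith
    have ha51 : Ahat / (N:ℝ) ≤ 0.51 := by
      rw [div_le_iff₀ hNR0]
      have h2 : 2 * (α.val + 1) ≤ N + 1 := by omega
      have h2' : 2 * (((α.val:ℕ):ℝ) + 1) ≤ (N:ℝ) + 1 := by exact_mod_cast h2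
      rw [hAeq]
      linarith
    have hgs : nSc (gammaLoc N (α.val + 1)) = Ahat / (N:ℝ) := by rw [hgs1, hAeq]
    have hlb : |nSc (sortedEigs hA α) - Ahat / (N:ℝ)| ≤ Z + 1/(N:ℝ) := by
      rw [hAeq]
      exact hnb
    have hres := bulk_lower hB0.le ha0 ha51 hble hgs hlb
    have hfr : (0:ℝ) < (N:ℝ)/Ahat := by positivity
    have hprod : (Ahat/(N:ℝ)) ^ ((1:ℝ)/3) * ((N:ℝ)/Ahat) ^ ((1:ℝ)/3) = 1 := by
      rw [← Real.mul_rpow ha0.le hfr.le,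
        show Ahat/(N:ℝ) * ((N:ℝ)/Ahat) = 1 by field_simp, Real.one_rpow]
    calc |sortedEigs hA α - gammaLoc N (α.val + 1)|
        = |sortedEigs hA α - gammaLoc N (α.val + 1)| * (Ahat/(N:ℝ)) ^ ((1:ℝ)/3)
          * ((N:ℝ)/Ahat) ^ ((1:ℝ)/3) := by
          rw [mul_assoc, hprod, mul_one]
      _ ≤ 7 * (Z + 1/(N:ℝ)) * ((N:ℝ)/Ahat) ^ ((1:ℝ)/3) :=
          mul_le_mul_of_nonneg_right hres (Real.rpow_nonneg hfr.le _)
      _ ≤ 42 * Z * ((N:ℝ)/Ahat) ^ ((1:ℝ)/3) := by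
          apply mul_le_mul_of_nonneg_right _ (Real.rpow_nonneg hfr.le _)
          linarith
  · -- upper half
    have hNle : N ≤ 2 * α.val + 1 := by omega
    have hNleR : (N:ℝ) ≤ 2 * ((α.val:ℕ):ℝ) + 1 := by exact_mod_cast hNle
    have hAeq : Ahat = (N:ℝ) - ((α.val:ℕ):ℝ) := by
      rw [hAhat, min_eq_right (by omega)]
      rw [Nat.cast_sub (by omega : α.val ≤ N)]
    have ha0 : (0:ℝ) < (Ahat - 1) / (N:ℝ) := div_pos (by linarith) hNR0
    have hble : 20 * (Z + 1/(N:ℝ)) ≤ (Ahat - 1) / (N:ℝ) := by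
      rw [le_div_iff₀ hNR0]
      have hBN := mul_le_mul_of_nonneg_right hB3 hNR0.le
      nlinarith
    have ha51 : (Ahat - 1) / (N:ℝ) ≤ 0.51 := by
      rw [div_le_iff₀ hNR0, hAeq]
      linarith
    have hgs : nSc (-(gammaLoc N (α.val + 1))) = (Ahat - 1) / (N:ℝ) := by
      rw [nSc_symm, hgs1, hAeq]
      field_simp
      ring
    have hlb : |nSc (-(sortedEigs hA α)) - (Ahat - 1) / (N:ℝ)| ≤ Z + 1/(N:ℝ) := by
      rw [nSc_symm]
      have heq : |1 - nSc (sortedEigs hA α) - (Ahat - 1) / (N:ℝ)|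
          = |nSc (sortedEigs hA α) - (1 - (Ahat - 1) / (N:ℝ))| := by
        rw [abs_sub_comm]
        congr 1
        ring
      rw [heq]
      have h1a : 1 - (Ahat - 1) / (N:ℝ) = (((α.val:ℕ):ℝ) + 1)/(N:ℝ) := by
        rw [hAeq]
        field_simp
        ring
      rw [h1a]
      exact hnb
    have hres := bulk_lower hB0.le ha0 ha51 hble hgs hlb
    have habs : |-(sortedEigs hA α) - -(gammaLoc N (α.val + 1))|
        = |sortedEigs hA α - gammaLoc N (α.val + 1)| := by
      rw [show -(sortedEigs hA α) - -(gammaLoc N (α.val + 1))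
          = -(sortedEigs hA α - gammaLoc N (α.val + 1)) by ring, abs_neg]
    rw [habs] at hres
    have haA : Ahat/(2*(N:ℝ)) ≤ (Ahat - 1) / (N:ℝ) := by
      rw [div_le_div_iff₀ (by positivity) hNR0]
      nlinarith
    have hfrac2 : (0:ℝ) < 2*(N:ℝ)/Ahat := by positivity
    have ha13 : (Ahat/(2*(N:ℝ))) ^ ((1:ℝ)/3) ≤ ((Ahat - 1)/(N:ℝ)) ^ ((1:ℝ)/3) :=
      Real.rpow_le_rpow (by positivity) haA (by norm_num)
    have hprod : (Ahat/(2*(N:ℝ))) ^ ((1:ℝ)/3) * (2*(N:ℝ)/Ahat) ^ ((1:ℝ)/3) = 1 := by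
      rw [← Real.mul_rpow (by positivity) hfrac2.le,
        show Ahat/(2*(N:ℝ)) * (2*(N:ℝ)/Ahat) = 1 by field_simp, Real.one_rpow]
    have h2NR : (2*(N:ℝ)/Ahat) ^ ((1:ℝ)/3) ≤ 2 * ((N:ℝ)/Ahat) ^ ((1:ℝ)/3) := by
      rw [show 2*(N:ℝ)/Ahat = 2 * ((N:ℝ)/Ahat) by ring,
        Real.mul_rpow (by norm_num) (by positivity)]
      apply mul_le_mul_of_nonneg_right _ (Real.rpow_nonneg (by positivity) _)
      calc (2:ℝ) ^ ((1:ℝ)/3) ≤ (2:ℝ) ^ (1:ℝ) :=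
            Real.rpow_le_rpow_of_exponent_le (by norm_num) (by norm_num)
        _ = 2 := Real.rpow_one 2
    have hBnn : 0 ≤ 7 * (Z + 1/(N:ℝ)) := by positivity
    calc |sortedEigs hA α - gammaLoc N (α.val + 1)|
        = |sortedEigs hA α - gammaLoc N (α.val + 1)|
          * ((Ahat/(2*(N:ℝ))) ^ ((1:ℝ)/3) * (2*(N:ℝ)/Ahat) ^ ((1:ℝ)/3)) := by
          rw [hprod, mul_one]
      _ = |sortedEigs hA α - gammaLoc N (α.val + 1)| * (Ahat/(2*(N:ℝ))) ^ ((1:ℝ)/3)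
          * (2*(N:ℝ)/Ahat) ^ ((1:ℝ)/3) := by ring
      _ ≤ |sortedEigs hA α - gammaLoc N (α.val + 1)| * ((Ahat - 1)/(N:ℝ)) ^ ((1:ℝ)/3)
          * (2*(N:ℝ)/Ahat) ^ ((1:ℝ)/3) := by
          apply mul_le_mul_of_nonneg_right _ (Real.rpow_nonneg hfrac2.le _)
          exact mul_le_mul_of_nonneg_left ha13 (abs_nonneg _)
      _ ≤ 7 * (Z + 1/(N:ℝ)) * (2*(N:ℝ)/Ahat) ^ ((1:ℝ)/3) :=
          mul_le_mul_of_nonneg_right hres (Real.rpow_nonneg hfrac2.le _)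
      _ ≤ 7 * (3*Z) * (2 * ((N:ℝ)/Ahat) ^ ((1:ℝ)/3)) := by
          apply mul_le_mul (by linarith) h2NR (Real.rpow_nonneg hfrac2.le _) (by positivity)
      _ = 42 * Z * ((N:ℝ)/Ahat) ^ ((1:ℝ)/3) := by ring

lemma edge_trivial {N : ℕ} {A : Matrix (Fin N) (Fin N) ℂ} (hA : A.IsHermitian) (α : Fin N)
    {Wv : ℝ} (hnw : max (hermOpNorm hA - 2) 0 ≤ Wv) :
    |sortedEigs hA α - gammaLoc N (α.val + 1)| ≤ 4 + Wv := by
  have hN0 : 0 < N := by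
    have := α.isLt
    omega
  have hgspec := gammaLoc_spec hN0 (by omega : 0 < α.val + 1)
    (by have := α.isLt; omega : α.val + 1 ≤ N)
  have hop : hermOpNorm hA ≤ 2 + Wv := by
    have h := le_max_left (hermOpNorm hA - 2) 0
    linarith
  have hlam := le_trans (abs_sortedEigs_le hA α) hop
  rw [abs_le] at hlam ⊢
  constructor
  · linarith [hgspec.2.2]
  · linarith [hgspec.2.1]

set_option maxHeartbeats 1000000 in
lemma edge_master {N : ℕ} {A : Matrix (Fin N) (Fin N) ℂ} (hA : A.IsHermitian) (α : Fin N)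
    {Z Ahat Wv : ℝ}
    (hN50 : (50:ℝ) ≤ (N:ℝ))
    (hAhat : Ahat = ((min (α.val + 1) (N - α.val) : ℕ) : ℝ))
    (hZ0 : 0 < Z)
    (hdev : ∀ Ee : ℝ, |countFn hA Ee - nSc Ee| ≤ Z)
    (hZN : 1/(N:ℝ) ≤ 2*Z)
    (hnw : max (hermOpNorm hA - 2) 0 ≤ Wv)
    (hP54 : Ahat/(N:ℝ) + 3*Z ≤ 0.54) :
    |sortedEigs hA α - gammaLoc N (α.val + 1)|
      ≤ Wv + 5 * (Ahat/(N:ℝ) + 3*Z) ^ ((2:ℝ)/3) := by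
  have hNR0 : (0:ℝ) < (N:ℝ) := by linarith
  have hN0 : 0 < N := by exact_mod_cast hNR0
  have hαN := α.isLt
  have hA1 : (1:ℝ) ≤ Ahat := by
    rw [hAhat]
    exact_mod_cast (by omega : 1 ≤ min (α.val + 1) (N - α.val))
  have hB3 : Z + 1/(N:ℝ) ≤ 3 * Z := by linarith
  have hWv0 : 0 ≤ Wv := le_trans (le_max_right _ _) hnw
  have hP0 : (0:ℝ) ≤ Ahat/(N:ℝ) + 3*Z := by positivity
  have hnb := nSc_lam_bounds hA α hdev
  rw [abs_le] at hnb
  have hgspec := gammaLoc_spec hN0 (by omega : 0 < α.val + 1) (by omega : α.val + 1 ≤ N)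
  have hgs1 : nSc (gammaLoc N (α.val + 1)) = (((α.val:ℕ):ℝ) + 1)/(N:ℝ) := by
    rw [hgspec.1]
    push_cast
    ring
  have hop : hermOpNorm hA ≤ 2 + Wv := by
    have h := le_max_left (hermOpNorm hA - 2) 0
    linarith
  have hlam := le_trans (abs_sortedEigs_le hA α) hop
  rw [abs_le] at hlam
  rcases le_or_gt (α.val + 1) (N - α.val) with hhalf | hhalf
  · -- lower half
    have hAeq : Ahat = ((α.val:ℕ):ℝ) + 1 := by
      rw [hAhat, min_eq_left hhalf]
      push_cast
      ring
    have haP : (((α.val:ℕ):ℝ) + 1)/(N:ℝ) ≤ Ahat/(N:ℝ) := by rw [hAeq]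
    apply edge_lower hP0 hP54 hWv0 hgspec.2.1
    · rw [hgs1]
      linarith
    · have h1 : (1:ℝ)/(N:ℝ) ≤ 2*Z := hZN
      calc nSc (sortedEigs hA α) ≤ (((α.val:ℕ):ℝ) + 1)/(N:ℝ) + (Z + 1/(N:ℝ)) := by
            linarith [hnb.2]
        _ ≤ Ahat/(N:ℝ) + 3*Z := by
            rw [hAeq]
            linarith
    · linarith [hlam.1]
  · -- upper half
    have hAeq : Ahat = (N:ℝ) - ((α.val:ℕ):ℝ) := by
      rw [hAhat, min_eq_right (by omega)]
      rw [Nat.cast_sub (by omega : α.val ≤ N)]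
    have h1a : 1 - (((α.val:ℕ):ℝ) + 1)/(N:ℝ) = (Ahat - 1)/(N:ℝ) := by
      rw [hAeq]
      field_simp
      ring
    have habs : |-(sortedEigs hA α) - -(gammaLoc N (α.val + 1))|
        = |sortedEigs hA α - gammaLoc N (α.val + 1)| := by
      rw [show -(sortedEigs hA α) - -(gammaLoc N (α.val + 1))
          = -(sortedEigs hA α - gammaLoc N (α.val + 1)) by ring, abs_neg]
    rw [← habs]
    apply edge_lower hP0 hP54 hWv0
    · linarith [hgspec.2.2]
    · rw [nSc_symm, hgs1, h1a]
      have hd : (Ahat - 1)/(N:ℝ) ≤ Ahat/(N:ℝ) :=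
        div_le_div_of_nonneg_right (by linarith) hNR0.le
      linarith
    · rw [nSc_symm]
      calc 1 - nSc (sortedEigs hA α)
          ≤ 1 - ((((α.val:ℕ):ℝ) + 1)/(N:ℝ) - (Z + 1/(N:ℝ))) := by linarith [hnb.1]
        _ = (Ahat - 1)/(N:ℝ) + (Z + 1/(N:ℝ)) := by rw [← h1a]; ring
        _ ≤ Ahat/(N:ℝ) + 3*Z := by
            have : (Ahat - 1)/(N:ℝ) ≤ Ahat/(N:ℝ) := by
              apply div_le_div_of_nonneg_right ?_ hNR0.le
              linarith
            linarith
    · linarith [hlam.2]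

end Aux

set_option maxHeartbeats 4000000

/-- **Eigenvalue locations / rigidity** (Theorem 7.5). Suppose `δ_- ≥ c`, and that
`‖H‖ ≤ 2 + O_≺(X)` and `sup_E |𝔫_N(E) - n(E)| = O_≺(Y)` hold for deterministic
control parameters `X, Y ≤ C`. With `α̂ = min(α, N+1-α)` (here `α` is `1`-based) and
`ε > 0` fixed: `|λ_α - γ_α| ≺ Y (N/α̂)^{1/3}` uniformly over `α` with `α̂ ≥ M^ε N Y`,
and `|λ_α - γ_α| ≺ X + (M^ε Y)^{2/3}` uniformly over `α` with `α̂ ≤ M^ε N Y`. -/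
theorem eigenvalue_rigidity
    (E : MatrixEnsemble) (δ : ℝ) (μmom : ℕ → ℝ) (hE : IsWignerType E δ μmom)
    (c C : ℝ) (hc : 0 < c)
    (hδminus : ∀ N, c ≤ deltaMinus (sMat E N))
    (X Y : ℕ → ℝ) (hXC : ∀ N, X N ≤ C) (hYC : ∀ N, Y N ≤ C)
    (hnorm : StochDom E.P (fun _ => (Set.univ : Set Unit))
      (fun N _ ω => max (hermOpNorm (hE.hermitian N ω) - 2) 0)
      (fun N _ _ => X N))
    (hcount : StochDom E.P (fun _ => (Set.univ : Set Unit))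
      (fun N _ ω => ⨆ Ee : ℝ, |countFn (hE.hermitian N ω) Ee - nSc Ee|)
      (fun N _ _ => Y N))
    (ε : ℝ) (hε : 0 < ε) :
    StochDom E.P
      (fun N => { α : Fin N |
        Mpar E N ^ ε * ((N : ℝ) * Y N) ≤ (min (α.val + 1) (N - α.val) : ℕ) })
      (fun N α ω => |sortedEigs (hE.hermitian N ω) α - gammaLoc N (α.val + 1)|)
      (fun N α _ => Y N * ((N : ℝ) / (min (α.val + 1) (N - α.val) : ℕ)) ^ ((1:ℝ)/3))
    ∧ StochDom E.P
      (fun N => { α : Fin N |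
        ((min (α.val + 1) (N - α.val) : ℕ) : ℝ) ≤ Mpar E N ^ ε * ((N : ℝ) * Y N) })
      (fun N α ω => |sortedEigs (hE.hermitian N ω) α - gammaLoc N (α.val + 1)|)
      (fun N α _ => X N + (Mpar E N ^ ε * Y N) ^ ((2:ℝ)/3)) := by
  have hδ0 := hE.δ_pos
  constructor
  · -- BULK part
    intro ε₁ hε₁ D hD
    set β := min ε₁ (ε * δ) with hβdef
    have hβ : 0 < β := lt_min hε₁ (mul_pos hε hδ0)
    obtain ⟨N₁, hN₁⟩ := hcount (β/8) (by positivity) (D+1) (by linarith)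
    obtain ⟨N₂, hN₂⟩ := hcount (β/8) (by positivity) 1 one_pos
    obtain ⟨N₃, hN₃⟩ := Filter.eventually_atTop.mp
      (((tendsto_rpow_atTop (by positivity : (0:ℝ) < 7/8*β)).comp
        tendsto_natCast_atTop_atTop).eventually_ge_atTop 240)
    refine ⟨max (max N₁ N₂) (max N₃ 50), ?_⟩
    intro N hN α hα
    simp only [max_le_iff] at hN
    obtain ⟨⟨hNN₁, hNN₂⟩, hNN₃, hNN₅⟩ := hN
    haveI : IsProbabilityMeasure (E.P N) := E.isProb N
    have hN0 : 0 < N := by omega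
    have hNR0 : (0:ℝ) < N := by exact_mod_cast hN0
    have hNR1 : (1:ℝ) ≤ N := by exact_mod_cast hN0
    have hN50 : (50:ℝ) ≤ N := by exact_mod_cast hNN₅
    have hrw1 : ((N:ℝ)) ^ (β/8) * ((N:ℝ) ^ (-(1:ℝ) - β/8) / 2) = 1/(2*(N:ℝ)) := by
      rw [show (N:ℝ) ^ (β/8) * ((N:ℝ) ^ (-(1:ℝ) - β/8) / 2)
          = (N:ℝ) ^ (β/8) * (N:ℝ) ^ (-(1:ℝ) - β/8) / 2 by ring, ← Real.rpow_add hNR0,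
        show β/8 + (-(1:ℝ) - β/8) = -1 by ring, Real.rpow_neg_one]
      ring
    have hYforce : (N:ℝ) ^ (-(1:ℝ) - β/8) / 2 ≤ Y N := by
      by_contra hcon
      push_neg at hcon
      have hp := hN₂ N hNN₂ () (Set.mem_univ ())
      have hev : {ω | (N:ℝ) ^ (β/8) * Y N
          < ⨆ Ee : ℝ, |countFn (hE.hermitian N ω) Ee - nSc Ee|} = Set.univ := by
        apply Set.eq_univ_of_forall
        intro ω
        simp only [Set.mem_setOf_eq]
        calc (N:ℝ) ^ (β/8) * Y N
            < (N:ℝ) ^ (β/8) * ((N:ℝ) ^ (-(1:ℝ) - β/8) / 2) :=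
              mul_lt_mul_of_pos_left hcon (Real.rpow_pos_of_pos hNR0 _)
          _ = 1/(2*(N:ℝ)) := hrw1
          _ ≤ _ := dev_lower (hE.hermitian N ω) hN0
      rw [hev, measure_univ] at hp
      have hlt1 : ENNReal.ofReal ((N:ℝ) ^ (-(1:ℝ))) < 1 := by
        rw [ENNReal.ofReal_lt_one, Real.rpow_neg_one]
        exact inv_lt_one_of_one_lt₀ (by linarith)
      exact absurd (lt_of_le_of_lt hp hlt1) (by norm_num)
    have hY0 : 0 < Y N := lt_of_lt_of_le (by positivity) hYforce
    have hprob := hN₁ N hNN₁ () (Set.mem_univ ())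
    refine le_trans (measure_mono ?_) (le_trans hprob (ENNReal.ofReal_le_ofReal
      (Real.rpow_le_rpow_of_exponent_le hNR1 (by linarith))))
    intro ω hω
    simp only [Set.mem_setOf_eq] at hω ⊢
    by_contra hgood
    push_neg at hgood
    set Z := (N:ℝ) ^ (β/8) * Y N with hZdef
    have hZ0 : 0 < Z := mul_pos (Real.rpow_pos_of_pos hNR0 _) hY0
    have hdev : ∀ Ee : ℝ, |countFn (hE.hermitian N ω) Ee - nSc Ee| ≤ Z := by
      intro Ee
      refine le_trans (le_ciSup (f := fun Ee : ℝ => |countFn (hE.hermitian N ω) Ee - nSc Ee|) ?_ Ee) hgood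
      refine ⟨2, ?_⟩
      rintro _ ⟨Ee', rfl⟩
      have h1 := countFn_nonneg (hE.hermitian N ω) Ee'
      have h2 := countFn_le_one (hE.hermitian N ω) hN0 Ee'
      have h3 := nSc_nonneg Ee'
      have h4 := nSc_le_one Ee'
      rw [abs_le]
      constructor <;> linarith
    have hZN : 1/(N:ℝ) ≤ 2*Z := by
      have h := mul_le_mul_of_nonneg_left hYforce
        (Real.rpow_pos_of_pos hNR0 (β/8)).le
      rw [hrw1] at h
      have h2 : 1/(2*(N:ℝ)) ≤ Z := h
      rw [show (1:ℝ)/(N:ℝ) = 2*(1/(2*(N:ℝ))) by ring]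
      linarith
    set Ahat := ((min (α.val + 1) (N - α.val) : ℕ) : ℝ) with hAhatdef
    have hα' : Mpar E N ^ ε * ((N:ℝ) * Y N) ≤ Ahat := hα
    have hM1 : (N:ℝ) ^ (ε*δ) ≤ Mpar E N ^ ε := by
      calc (N:ℝ) ^ (ε*δ) = ((N:ℝ) ^ δ) ^ ε := by
            rw [← Real.rpow_mul hNR0.le, mul_comm]
        _ ≤ Mpar E N ^ ε :=
            Real.rpow_le_rpow (Real.rpow_nonneg hNR0.le _) (hE.M_lower N) hε.le
    have hMβ : (N:ℝ) ^ β ≤ Mpar E N ^ ε :=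
      le_trans (Real.rpow_le_rpow_of_exponent_le hNR1 (min_le_right _ _)) hM1
    have hsplit : (N:ℝ) ^ β = (N:ℝ) ^ (7/8*β) * (N:ℝ) ^ (β/8) := by
      rw [← Real.rpow_add hNR0]
      congr 1
      ring
    have h240 : (240:ℝ) ≤ (N:ℝ) ^ (7/8*β) := hN₃ N hNN₃
    have hkey : 240 * ((N:ℝ) * Z) ≤ Ahat := by
      have h1 : (N:ℝ) ^ (7/8*β) * ((N:ℝ) * Z) ≤ Ahat := by
        calc (N:ℝ) ^ (7/8*β) * ((N:ℝ) * Z) = (N:ℝ) ^ β * ((N:ℝ) * Y N) := by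
              rw [hsplit, hZdef]
              ring
          _ ≤ Mpar E N ^ ε * ((N:ℝ) * Y N) :=
              mul_le_mul_of_nonneg_right hMβ (by positivity)
          _ ≤ Ahat := hα'
      have h2 : (0:ℝ) ≤ (N:ℝ) * Z := by positivity
      nlinarith
    have hmain := bulk_master (hE.hermitian N ω) α hN50 hAhatdef hZ0 hdev hZN hkey
    have hA0 : (0:ℝ) < Ahat := by nlinarith
    have hfr : (0:ℝ) ≤ ((N:ℝ)/Ahat) ^ ((1:ℝ)/3) := Real.rpow_nonneg (by positivity) _
    have h42 : 42 * (N:ℝ) ^ (β/8) ≤ (N:ℝ) ^ ε₁ := by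
      calc 42 * (N:ℝ) ^ (β/8) ≤ (N:ℝ) ^ (7/8*β) * (N:ℝ) ^ (β/8) :=
            mul_le_mul_of_nonneg_right (by linarith) (Real.rpow_nonneg hNR0.le _)
        _ = (N:ℝ) ^ β := hsplit.symm
        _ ≤ (N:ℝ) ^ ε₁ := Real.rpow_le_rpow_of_exponent_le hNR1 (min_le_left _ _)
    apply absurd hω
    push_neg
    calc |sortedEigs (hE.hermitian N ω) α - gammaLoc N (α.val + 1)|
        ≤ 42 * Z * ((N:ℝ)/Ahat) ^ ((1:ℝ)/3) := hmain
      _ = (42 * (N:ℝ) ^ (β/8)) * (Y N * ((N:ℝ)/Ahat) ^ ((1:ℝ)/3)) := by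
          rw [hZdef]
          ring
      _ ≤ (N:ℝ) ^ ε₁ * (Y N * ((N:ℝ)/Ahat) ^ ((1:ℝ)/3)) :=
          mul_le_mul_of_nonneg_right h42 (mul_nonneg hY0.le hfr)
  · -- EDGE part
    intro ε₁ hε₁ D hD
    set β := min ε₁ (ε * δ) with hβdef
    have hβ : 0 < β := lt_min hε₁ (mul_pos hε hδ0)
    obtain ⟨N₁, hN₁⟩ := hcount (β/8) (by positivity) (D+1) (by linarith)
    obtain ⟨N₂, hN₂⟩ := hcount (β/8) (by positivity) 1 one_pos
    obtain ⟨N₄, hN₄⟩ := hnorm ε₁ hε₁ (D+1) (by linarith)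
    obtain ⟨N₃, hN₃⟩ := Filter.eventually_atTop.mp
      (((tendsto_rpow_atTop (by positivity : (0:ℝ) < 7/8*β)).comp
        tendsto_natCast_atTop_atTop).eventually_ge_atTop 240)
    refine ⟨max (max N₁ N₂) (max (max N₃ N₄) 50), ?_⟩
    intro N hN α hα
    simp only [max_le_iff] at hN
    obtain ⟨⟨hNN₁, hNN₂⟩, ⟨hNN₃, hNN₄⟩, hNN₅⟩ := hN
    haveI : IsProbabilityMeasure (E.P N) := E.isProb N
    have hN0 : 0 < N := by omega
    have hNR0 : (0:ℝ) < N := by exact_mod_cast hN0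
    have hNR1 : (1:ℝ) ≤ N := by exact_mod_cast hN0
    have hNR2 : (2:ℝ) ≤ N := by exact_mod_cast (by omega : 2 ≤ N)
    have hN50 : (50:ℝ) ≤ N := by exact_mod_cast hNN₅
    have hrw1 : ((N:ℝ)) ^ (β/8) * ((N:ℝ) ^ (-(1:ℝ) - β/8) / 2) = 1/(2*(N:ℝ)) := by
      rw [show (N:ℝ) ^ (β/8) * ((N:ℝ) ^ (-(1:ℝ) - β/8) / 2)
          = (N:ℝ) ^ (β/8) * (N:ℝ) ^ (-(1:ℝ) - β/8) / 2 by ring, ← Real.rpow_add hNR0,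
        show β/8 + (-(1:ℝ) - β/8) = -1 by ring, Real.rpow_neg_one]
      ring
    have hYforce : (N:ℝ) ^ (-(1:ℝ) - β/8) / 2 ≤ Y N := by
      by_contra hcon
      push_neg at hcon
      have hp := hN₂ N hNN₂ () (Set.mem_univ ())
      have hev : {ω | (N:ℝ) ^ (β/8) * Y N
          < ⨆ Ee : ℝ, |countFn (hE.hermitian N ω) Ee - nSc Ee|} = Set.univ := by
        apply Set.eq_univ_of_forall
        intro ω
        simp only [Set.mem_setOf_eq]
        calc (N:ℝ) ^ (β/8) * Y N
            < (N:ℝ) ^ (β/8) * ((N:ℝ) ^ (-(1:ℝ) - β/8) / 2) :=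
              mul_lt_mul_of_pos_left hcon (Real.rpow_pos_of_pos hNR0 _)
          _ = 1/(2*(N:ℝ)) := hrw1
          _ ≤ _ := dev_lower (hE.hermitian N ω) hN0
      rw [hev, measure_univ] at hp
      have hlt1 : ENNReal.ofReal ((N:ℝ) ^ (-(1:ℝ))) < 1 := by
        rw [ENNReal.ofReal_lt_one, Real.rpow_neg_one]
        exact inv_lt_one_of_one_lt₀ (by linarith)
      exact absurd (lt_of_le_of_lt hp hlt1) (by norm_num)
    have hY0 : 0 < Y N := lt_of_lt_of_le (by positivity) hYforce
    simp only [Set.mem_setOf_eq] at hα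
    have hM1 : (N:ℝ) ^ (ε*δ) ≤ Mpar E N ^ ε := by
      calc (N:ℝ) ^ (ε*δ) = ((N:ℝ) ^ δ) ^ ε := by
            rw [← Real.rpow_mul hNR0.le, mul_comm]
        _ ≤ Mpar E N ^ ε :=
            Real.rpow_le_rpow (Real.rpow_nonneg hNR0.le _) (hE.M_lower N) hε.le
    have hMβ : (N:ℝ) ^ β ≤ Mpar E N ^ ε :=
      le_trans (Real.rpow_le_rpow_of_exponent_le hNR1 (min_le_right _ _)) hM1
    have hsplit : (N:ℝ) ^ β = (N:ℝ) ^ (7/8*β) * (N:ℝ) ^ (β/8) := by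
      rw [← Real.rpow_add hNR0]
      congr 1
      ring
    have h240 : (240:ℝ) ≤ (N:ℝ) ^ (7/8*β) := hN₃ N hNN₃
    have hone8 : (1:ℝ) ≤ (N:ℝ) ^ (β/8) := by
      calc (1:ℝ) = (N:ℝ) ^ (0:ℝ) := (Real.rpow_zero _).symm
        _ ≤ (N:ℝ) ^ (β/8) := Real.rpow_le_rpow_of_exponent_le hNR1 (by linarith)
    have hMε1 : (1:ℝ) ≤ Mpar E N ^ ε := by
      refine le_trans ?_ hMβ
      calc (1:ℝ) = (N:ℝ) ^ (0:ℝ) := (Real.rpow_zero _).symm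
        _ ≤ (N:ℝ) ^ β := Real.rpow_le_rpow_of_exponent_le hNR1 hβ.le
    have hQ0 : 0 < Mpar E N ^ ε * Y N := mul_pos (lt_of_lt_of_le one_pos hMε1) hY0
    have hNε : 240 * (N:ℝ) ^ (β/8) ≤ (N:ℝ) ^ ε₁ := by
      calc 240 * (N:ℝ) ^ (β/8) ≤ (N:ℝ) ^ (7/8*β) * (N:ℝ) ^ (β/8) :=
            mul_le_mul_of_nonneg_right h240 (Real.rpow_nonneg hNR0.le _)
        _ = (N:ℝ) ^ β := hsplit.symm
        _ ≤ (N:ℝ) ^ ε₁ := Real.rpow_le_rpow_of_exponent_le hNR1 (min_le_left _ _)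
    have hsub : {ω | (N:ℝ) ^ ε₁ * (X N + (Mpar E N ^ ε * Y N) ^ ((2:ℝ)/3))
          < |sortedEigs (hE.hermitian N ω) α - gammaLoc N (α.val + 1)|}
        ⊆ {ω | (N:ℝ) ^ (β/8) * Y N
            < ⨆ Ee : ℝ, |countFn (hE.hermitian N ω) Ee - nSc Ee|}
          ∪ {ω | (N:ℝ) ^ ε₁ * X N < max (hermOpNorm (hE.hermitian N ω) - 2) 0} := by
      intro ω hω
      simp only [Set.mem_setOf_eq] at hω
      rw [Set.mem_union]
      by_contra hgood
      push_neg at hgood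
      simp only [Set.mem_setOf_eq, not_lt] at hgood
      obtain ⟨hg1, hg2⟩ := hgood
      set Z := (N:ℝ) ^ (β/8) * Y N with hZdef
      have hZ0 : 0 < Z := mul_pos (Real.rpow_pos_of_pos hNR0 _) hY0
      have hdev : ∀ Ee : ℝ, |countFn (hE.hermitian N ω) Ee - nSc Ee| ≤ Z := by
        intro Ee
        refine le_trans (le_ciSup (f := fun Ee : ℝ => |countFn (hE.hermitian N ω) Ee - nSc Ee|) ?_ Ee) hg1
        refine ⟨2, ?_⟩
        rintro _ ⟨Ee', rfl⟩
        have h1 := countFn_nonneg (hE.hermitian N ω) Ee'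
        have h2 := countFn_le_one (hE.hermitian N ω) hN0 Ee'
        have h3 := nSc_nonneg Ee'
        have h4 := nSc_le_one Ee'
        rw [abs_le]
        constructor <;> linarith
      have hZN : 1/(N:ℝ) ≤ 2*Z := by
        have h := mul_le_mul_of_nonneg_left hYforce
          (Real.rpow_pos_of_pos hNR0 (β/8)).le
        rw [hrw1] at h
        have h2 : 1/(2*(N:ℝ)) ≤ Z := h
        rw [show (1:ℝ)/(N:ℝ) = 2*(1/(2*(N:ℝ))) by ring]
        linarith
      set Ahat := ((min (α.val + 1) (N - α.val) : ℕ) : ℝ) with hAhatdef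
      set Q := Mpar E N ^ ε * Y N with hQdef
      have hA1 : (1:ℝ) ≤ Ahat := by
        rw [hAhatdef]
        exact_mod_cast (by omega : 1 ≤ min (α.val + 1) (N - α.val))
      have haQ : Ahat / (N:ℝ) ≤ Q := by
        rw [div_le_iff₀ hNR0]
        calc Ahat ≤ Mpar E N ^ ε * ((N:ℝ) * Y N) := hα
          _ = Q * (N:ℝ) := by
              rw [hQdef]
              ring
      have hZQ : Z ≤ (N:ℝ) ^ (β/8) * Q := by
        rw [hZdef, hQdef]
        have h1 : Y N ≤ Mpar E N ^ ε * Y N := le_mul_of_one_le_left hY0.le hMε1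
        exact mul_le_mul_of_nonneg_left h1 (Real.rpow_nonneg hNR0.le _)
      have hQ23nn : (0:ℝ) ≤ Q ^ ((2:ℝ)/3) := Real.rpow_nonneg hQ0.le _
      have hm1 : (N:ℝ) ^ (β/8) * (N:ℝ) ^ (-(β/8)) = 1 := by
        rw [← Real.rpow_add hNR0]
        norm_num
      have hP0pos : (0:ℝ) < Ahat/(N:ℝ) + 3*Z := by positivity
      have hP0le : Ahat/(N:ℝ) + 3*Z ≤ 4 * ((N:ℝ) ^ (β/8) * Q) := by
        have hQle : Q ≤ (N:ℝ) ^ (β/8) * Q := le_mul_of_one_le_left hQ0.le hone8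
        linarith [haQ, hZQ]
      rcases le_or_gt (Ahat/(N:ℝ) + 3*Z) 0.54 with hsplit54 | hsplit54
      · have hmain := edge_master (hE.hermitian N ω) α hN50 hAhatdef hZ0 hdev hZN hg2 hsplit54
        have hP023 : (Ahat/(N:ℝ) + 3*Z) ^ ((2:ℝ)/3)
            ≤ (4 * (N:ℝ) ^ (β/8)) * Q ^ ((2:ℝ)/3) := by
          have hbase1 : (1:ℝ) ≤ 4 * (N:ℝ) ^ (β/8) := by linarith
          calc (Ahat/(N:ℝ) + 3*Z) ^ ((2:ℝ)/3)
              ≤ (4 * (N:ℝ) ^ (β/8) * Q) ^ ((2:ℝ)/3) := by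
                apply Real.rpow_le_rpow hP0pos.le _ (by norm_num)
                calc Ahat/(N:ℝ) + 3*Z ≤ 4 * ((N:ℝ) ^ (β/8) * Q) := hP0le
                  _ = 4 * (N:ℝ) ^ (β/8) * Q := by ring
            _ = (4 * (N:ℝ) ^ (β/8)) ^ ((2:ℝ)/3) * Q ^ ((2:ℝ)/3) :=
                Real.mul_rpow (by positivity) hQ0.le
            _ ≤ (4 * (N:ℝ) ^ (β/8)) * Q ^ ((2:ℝ)/3) := by
                apply mul_le_mul_of_nonneg_right _ hQ23nn
                calc (4 * (N:ℝ) ^ (β/8)) ^ ((2:ℝ)/3)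
                    ≤ (4 * (N:ℝ) ^ (β/8)) ^ (1:ℝ) :=
                      Real.rpow_le_rpow_of_exponent_le hbase1 (by norm_num)
                  _ = 4 * (N:ℝ) ^ (β/8) := Real.rpow_one _
        have hbound : |sortedEigs (hE.hermitian N ω) α - gammaLoc N (α.val + 1)|
            ≤ (N:ℝ) ^ ε₁ * (X N + Q ^ ((2:ℝ)/3)) := by
          have h20 : 5 * (4 * (N:ℝ) ^ (β/8)) ≤ (N:ℝ) ^ ε₁ := by
            have : (0:ℝ) ≤ (N:ℝ) ^ (β/8) := Real.rpow_nonneg hNR0.le _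
            linarith [hNε]
          calc |sortedEigs (hE.hermitian N ω) α - gammaLoc N (α.val + 1)|
              ≤ ((N:ℝ) ^ ε₁ * X N) + 5 * (Ahat/(N:ℝ) + 3*Z) ^ ((2:ℝ)/3) := hmain
            _ ≤ ((N:ℝ) ^ ε₁ * X N) + (N:ℝ) ^ ε₁ * Q ^ ((2:ℝ)/3) := by
                have h5 : 5 * (Ahat/(N:ℝ) + 3*Z) ^ ((2:ℝ)/3)
                    ≤ 5 * ((4 * (N:ℝ) ^ (β/8)) * Q ^ ((2:ℝ)/3)) := by linarith
                nlinarith [hQ23nn, h20]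
            _ = (N:ℝ) ^ ε₁ * (X N + Q ^ ((2:ℝ)/3)) := by ring
        exact absurd hω (not_lt.mpr hbound)
      · have hmain := edge_trivial (hE.hermitian N ω) α hg2
        have hq8 : 1/8 * (N:ℝ) ^ (-(β/8)) ≤ Q := by
          have h2 : (1:ℝ)/8 ≤ (N:ℝ) ^ (β/8) * Q := by nlinarith
          calc 1/8 * (N:ℝ) ^ (-(β/8))
              ≤ ((N:ℝ) ^ (β/8) * Q) * (N:ℝ) ^ (-(β/8)) :=
                mul_le_mul_of_nonneg_right h2 (Real.rpow_nonneg hNR0.le _)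
            _ = Q * ((N:ℝ) ^ (β/8) * (N:ℝ) ^ (-(β/8))) := by ring
            _ = Q := by rw [hm1, mul_one]
        have h8nn : (0:ℝ) ≤ 1/8 * (N:ℝ) ^ (-(β/8)) := by positivity
        have hQ23 : 1/4 * (N:ℝ) ^ (-(β/8)) ≤ Q ^ ((2:ℝ)/3) := by
          have hstep := Real.rpow_le_rpow h8nn hq8 (by norm_num : (0:ℝ) ≤ (2:ℝ)/3)
          refine le_trans ?_ hstep
          rw [Real.mul_rpow (by norm_num) (Real.rpow_nonneg hNR0.le _)]
          have h18 : ((1:ℝ)/8) ^ ((2:ℝ)/3) = 1/4 := by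
            rw [show (1/8:ℝ) = (1/4:ℝ) ^ ((3:ℝ)/2) by
              rw [show (1/4:ℝ) = ((1/2:ℝ)) ^ (2:ℕ) by norm_num,
                ← Real.rpow_natCast ((1/2):ℝ) 2, ← Real.rpow_mul (by norm_num)]
              rw [show ((2:ℕ):ℝ) * ((3:ℝ)/2) = ((3:ℕ):ℝ) by norm_num,
                Real.rpow_natCast]
              norm_num]
            exact rpow_three_halves_inv (by norm_num)
          rw [h18]
          apply mul_le_mul_of_nonneg_left _ (by norm_num)
          calc (N:ℝ) ^ (-(β/8)) ≤ (N:ℝ) ^ (-(β/8) * ((2:ℝ)/3)) := by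
                apply Real.rpow_le_rpow_of_exponent_le hNR1
                nlinarith
            _ = ((N:ℝ) ^ (-(β/8))) ^ ((2:ℝ)/3) := Real.rpow_mul hNR0.le _ _
        have hfin : (4:ℝ) ≤ (N:ℝ) ^ ε₁ * Q ^ ((2:ℝ)/3) := by
          have h1 := mul_le_mul hNε hQ23 (by positivity) (Real.rpow_nonneg hNR0.le ε₁)
          have h2 : (240 * (N:ℝ) ^ (β/8)) * (1/4 * (N:ℝ) ^ (-(β/8))) = 60 := by
            rw [show (240 * (N:ℝ) ^ (β/8)) * (1/4 * (N:ℝ) ^ (-(β/8)))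
                = 60 * ((N:ℝ) ^ (β/8) * (N:ℝ) ^ (-(β/8))) by ring, hm1]
            norm_num
          rw [h2] at h1
          linarith
        have hbound : |sortedEigs (hE.hermitian N ω) α - gammaLoc N (α.val + 1)|
            ≤ (N:ℝ) ^ ε₁ * (X N + Q ^ ((2:ℝ)/3)) := by
          calc |sortedEigs (hE.hermitian N ω) α - gammaLoc N (α.val + 1)|
              ≤ 4 + (N:ℝ) ^ ε₁ * X N := hmain
            _ ≤ (N:ℝ) ^ ε₁ * X N + (N:ℝ) ^ ε₁ * Q ^ ((2:ℝ)/3) := by linarith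
            _ = (N:ℝ) ^ ε₁ * (X N + Q ^ ((2:ℝ)/3)) := by ring
        exact absurd hω (not_lt.mpr hbound)
    calc E.P N {ω | (N:ℝ) ^ ε₁ * (X N + (Mpar E N ^ ε * Y N) ^ ((2:ℝ)/3))
          < |sortedEigs (hE.hermitian N ω) α - gammaLoc N (α.val + 1)|}
        ≤ E.P N ({ω | (N:ℝ) ^ (β/8) * Y N
            < ⨆ Ee : ℝ, |countFn (hE.hermitian N ω) Ee - nSc Ee|}
          ∪ {ω | (N:ℝ) ^ ε₁ * X N < max (hermOpNorm (hE.hermitian N ω) - 2) 0}) :=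
          measure_mono hsub
      _ ≤ E.P N {ω | (N:ℝ) ^ (β/8) * Y N
            < ⨆ Ee : ℝ, |countFn (hE.hermitian N ω) Ee - nSc Ee|}
          + E.P N {ω | (N:ℝ) ^ ε₁ * X N
            < max (hermOpNorm (hE.hermitian N ω) - 2) 0} := measure_union_le _ _
      _ ≤ ENNReal.ofReal ((N:ℝ) ^ (-(D+1))) + ENNReal.ofReal ((N:ℝ) ^ (-(D+1))) :=
          add_le_add (hN₁ N hNN₁ () (Set.mem_univ ())) (hN₄ N hNN₄ () (Set.mem_univ ()))
      _ ≤ ENNReal.ofReal ((N:ℝ) ^ (-D)) := by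
          rw [← ENNReal.ofReal_add (Real.rpow_nonneg hNR0.le _) (Real.rpow_nonneg hNR0.le _)]
          apply ENNReal.ofReal_le_ofReal
          have hsp : (N:ℝ) ^ (-(D+1)) = (N:ℝ) ^ (-D) * (N:ℝ)⁻¹ := by
            rw [← Real.rpow_neg_one (N:ℝ), ← Real.rpow_add hNR0]
            congr 1
            ring
          rw [hsp]
          have hD0 : (0:ℝ) < (N:ℝ) ^ (-D) := Real.rpow_pos_of_pos hNR0 _
          have hinv : (N:ℝ)⁻¹ ≤ 1/2 := by
            rw [inv_le_comm₀ (by linarith) (by norm_num)]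
            linarith
          nlinarith

end
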